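/- arXiv:2302.02342 — 7 statements merged into one kernel-verified Lean document; each statement's English description precedes it below -/
import Mathlib

section
/- Let η be a nonempty partition. Then the parts of η^c are given by: η^c_i = η_i − 1 if i ≤ d̃(η), η^c_{d̃(η)+1} = d(η) − 1, and η^c_i = η_{i−1} if i > d̃(η) + 1. -/
/-- A partition `η`, given by its parts `η.part i` for `i ≥ 1` (indexed from 1;
by convention `part 0 = part 1`), weakly decreasing and eventually zero. -/
structure PartitionSeq where
  part : ℕ → ℕ
  antitone : ∀ ⦃i j : ℕ⦄, i ≤ j → part j ≤ part i
  exists_zero : ∃ N, part N = 0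
  head : part 0 = part 1

namespace PartitionSeq

/-- The Maya diagram of `η` in the ℤ-model: an integer `t` represents the
half-integer `t + 1/2`, so `mayaZ η` encodes `S(η) = {η_i − i + 1/2 | i ≥ 1}`. -/
def mayaZ (η : PartitionSeq) : Set ℤ := {t | ∃ i : ℕ, 1 ≤ i ∧ t = (η.part i : ℤ) - (i : ℤ)}

/-- `ℓ(η)`: the number of nonzero parts. -/
noncomputable def len (η : PartitionSeq) : ℕ := sSup {i | η.part i ≠ 0}

/-- `d(η) = max {i : η_i ≥ i}` (Durfee square size), `0` for the empty partition. -/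
noncomputable def durfee (η : PartitionSeq) : ℕ := sSup {i | i ≤ η.part i}

/-- `d̃(η) = max {i : η_i ≥ d(η)}`. -/
noncomputable def dtil (η : PartitionSeq) : ℕ := sSup {i | η.durfee ≤ η.part i}

/-- `min S⁺`: the least element of `S` representing a positive half-integer. -/
noncomputable def minPos (S : Set ℤ) : ℤ := sInf {t | t ∈ S ∧ 0 ≤ t}

/-- `max S⁻`: the greatest element not in `S` representing a negative half-integer. -/
noncomputable def maxNeg (S : Set ℤ) : ℤ := sSup {t | t ∉ S ∧ t < 0}

/-- `ηr = η^r`: defined by `S(η^r) = {t+1 | t ∈ S(η) \ {min S(η)⁺}}`. -/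
def IsR (η ηr : PartitionSeq) : Prop :=
  mayaZ ηr = (fun t => t + 1) '' (mayaZ η \ {minPos (mayaZ η)})

/-- `ηc = η^c`: defined by `S(η^c) = {t−1 | t ∈ S(η) ∪ {max S(η)⁻}}`. -/
def IsC (η ηc : PartitionSeq) : Prop :=
  mayaZ ηc = (fun t => t - 1) '' (mayaZ η ∪ {maxNeg (mayaZ η)})

/-- `ηrc = η^{rc}`: defined by `S(η^{rc}) = (S(η) \ {min S(η)⁺}) ∪ {max S(η)⁻}`. -/
def IsRC (η ηrc : PartitionSeq) : Prop :=
  mayaZ ηrc = (mayaZ η \ {minPos (mayaZ η)}) ∪ {maxNeg (mayaZ η)}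

/-- `ηc = η′` is the conjugate partition: `η′_j = |{i ≥ 1 : η_i ≥ j}|`. -/
def IsConj (η ηc : PartitionSeq) : Prop :=
  ∀ j : ℕ, 1 ≤ j → ηc.part j = Set.ncard {i : ℕ | 1 ≤ i ∧ j ≤ η.part i}

/-- `|η|`: the sum of the parts. -/
noncomputable def size (η : PartitionSeq) : ℕ := ∑ i ∈ Finset.Icc 1 η.len, η.part i

end PartitionSeq

/-- Two strictly antitone ℤ-sequences with the same range on `i ≥ 1` agree. -/
lemma sa_key (f g : ℕ → ℤ) (hf : StrictAnti f) (hg : StrictAnti g)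
    (h : {t : ℤ | ∃ i : ℕ, 1 ≤ i ∧ t = f i} = {t : ℤ | ∃ i : ℕ, 1 ≤ i ∧ t = g i}) :
    ∀ i : ℕ, 1 ≤ i → f i = g i := by
  intro i
  induction i using Nat.strong_induction_on with
  | _ i IH =>
    intro hi
    have h1 : f i ∈ {t : ℤ | ∃ j : ℕ, 1 ≤ j ∧ t = g j} := by
      rw [← h]; exact ⟨i, hi, rfl⟩
    obtain ⟨k, hk1, hk⟩ := h1
    have h2 : g i ∈ {t : ℤ | ∃ j : ℕ, 1 ≤ j ∧ t = f j} := by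
      rw [h]; exact ⟨i, hi, rfl⟩
    obtain ⟨l, hl1, hl⟩ := h2
    have hik : i ≤ k := by
      by_contra hcon
      push_neg at hcon
      have e1 := IH k hcon hk1
      have e2 := hf hcon
      omega
    have hil : i ≤ l := by
      by_contra hcon
      push_neg at hcon
      have e1 := IH l hcon hl1
      have e2 := hg hcon
      omega
    have t1 : g k ≤ g i := hg.antitone hik
    have t2 : f l ≤ f i := hf.antitone hil
    omega

def fAux (η : PartitionSeq) (d e : ℕ) : ℕ → ℤ := fun i =>
  if i ≤ e then (η.part i : ℤ) - 1 - i
  else if i = e + 1 then (d : ℤ) - 1 - i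
  else (η.part (i - 1) : ℤ) - i

lemma fAux_strictAnti (η : PartitionSeq) (d e : ℕ) (hde : d ≤ e)
    (he1 : d ≤ η.part e) (he2 : η.part (e + 1) < d) : StrictAnti (fAux η d e) := by
  apply strictAnti_nat_of_succ_lt
  intro i
  unfold fAux
  rcases Nat.lt_or_ge i e with h | h
  · rw [if_pos (show i + 1 ≤ e from h), if_pos (le_of_lt h)]
    have := η.antitone (show i ≤ i + 1 by omega)
    push_cast; omega
  rcases Nat.eq_or_lt_of_le h with h' | h'
  · subst h'
    rw [if_neg (show ¬ _ + 1 ≤ _ by omega), if_pos rfl, if_pos (le_refl _)]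
    push_cast; omega
  rcases Nat.eq_or_lt_of_le h' with h'' | h''
  · rw [if_neg (by omega), if_neg (by omega), if_neg (by omega), if_pos h''.symm]
    have : i + 1 - 1 = i := by omega
    rw [this]
    have : η.part i ≤ η.part (e + 1) := η.antitone (by omega)
    push_cast; omega
  · rw [if_neg (by omega), if_neg (by omega), if_neg (by omega), if_neg (by omega)]
    have h3 : i + 1 - 1 = i := by omega
    rw [h3]
    have : η.part i ≤ η.part (i - 1) := η.antitone (by omega)
    push_cast; omega

/-- Parts of `η^c`: `η^c_i = η_i − 1` for `i ≤ d̃(η)`, `η^c_{d̃(η)+1} = d(η) − 1`,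
and `η^c_i = η_{i−1}` for `i > d̃(η) + 1`. -/
theorem parts_of_c (η ηc : PartitionSeq) (hne : η.part 1 ≠ 0) (hc : η.IsC ηc) :
    (∀ i : ℕ, 1 ≤ i → i ≤ η.dtil → ηc.part i = η.part i - 1) ∧
    ηc.part (η.dtil + 1) = η.durfee - 1 ∧
    (∀ i : ℕ, η.dtil + 1 < i → ηc.part i = η.part (i - 1)) := by
  obtain ⟨N, hN⟩ := η.exists_zero
  set d := η.durfee with hddef
  set e := η.dtil with hedef
  -- Basic facts about d
  have hAbdd : BddAbove {i | i ≤ η.part i} := by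
    refine ⟨η.part 1, fun i hi => ?_⟩
    have h2 : η.part i ≤ η.part 0 := η.antitone (Nat.zero_le i)
    have h3 := η.head
    exact le_trans hi (by omega)
  have hAne : Set.Nonempty {i | i ≤ η.part i} := ⟨1, by simpa using Nat.one_le_iff_ne_zero.mpr hne⟩
  have hd0 : 1 ≤ d := le_csSup hAbdd (by simpa using Nat.one_le_iff_ne_zero.mpr hne)
  have hd1 : d ≤ η.part d := Nat.sSup_mem hAne hAbdd
  have hd2 : η.part (d + 1) ≤ d := by
    by_contra hcon
    push_neg at hcon
    have : d + 1 ≤ d := le_csSup hAbdd (show d + 1 ≤ η.part (d+1) from hcon)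
    omega
  -- Basic facts about e
  have hBbdd : BddAbove {i | d ≤ η.part i} := by
    refine ⟨N, fun i hi => ?_⟩
    by_contra hcon
    push_neg at hcon
    have : η.part i ≤ η.part N := η.antitone (le_of_lt hcon)
    simp only [Set.mem_setOf_eq] at hi
    omega
  have hBne : Set.Nonempty {i | d ≤ η.part i} := ⟨d, hd1⟩
  have hde : d ≤ e := le_csSup hBbdd hd1
  have he1 : d ≤ η.part e := Nat.sSup_mem hBne hBbdd
  have he2 : η.part (e + 1) < d := by
    by_contra hcon
    push_neg at hcon
    have : e + 1 ≤ e := le_csSup hBbdd hcon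
    omega
  have hle : ∀ i : ℕ, i ≤ e → d ≤ η.part i := fun i hi => le_trans he1 (η.antitone hi)
  have hgt : ∀ i : ℕ, e + 1 ≤ i → η.part i < d := fun i hi =>
    lt_of_le_of_lt (η.antitone hi) he2
  set m : ℤ := (d : ℤ) - e - 1 with hmdef
  -- Step 1 : maxNeg (mayaZ η) = m
  have hmS : m ∉ η.mayaZ := by
    rintro ⟨i, hi1, hieq⟩
    rcases le_or_gt i e with h | h
    · have := hle i h
      omega
    · have := hgt i h
      omega
  have hbetween : ∀ t : ℤ, m < t → t < 0 → t ∈ η.mayaZ := by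
    intro t h1 h2
    set i : ℕ := d + (-t).toNat with hidef
    have hi1 : d + 1 ≤ i := by omega
    have hi2 : i ≤ e := by omega
    have hival : (i : ℤ) = (d : ℤ) - t := by push_cast; omega
    have hup : η.part i ≤ d := le_trans (η.antitone hi1) hd2
    have hdn : d ≤ η.part i := hle i hi2
    exact ⟨i, by omega, by omega⟩
  have hmax : PartitionSeq.maxNeg η.mayaZ = m := by
    have hub : ∀ t ∈ {t : ℤ | t ∉ η.mayaZ ∧ t < 0}, t ≤ m := by
      rintro t ⟨ht1, ht2⟩
      by_contra hcon
      push_neg at hcon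
      exact ht1 (hbetween t hcon ht2)
    have hmem : m ∈ {t : ℤ | t ∉ η.mayaZ ∧ t < 0} := ⟨hmS, by omega⟩
    exact le_antisymm (csSup_le ⟨m, hmem⟩ hub) (le_csSup ⟨m, hub⟩ hmem)
  -- Step 2 : strictly antitone enumerations
  have hf : StrictAnti (fAux η d e) := fAux_strictAnti η d e hde he1 he2
  set g : ℕ → ℤ := fun i => (ηc.part i : ℤ) - i with hgdef
  have hg : StrictAnti g := by
    apply strictAnti_nat_of_succ_lt
    intro i
    have := ηc.antitone (show i ≤ i + 1 by omega)
    simp only [hgdef]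
    push_cast
    omega
  -- Step 3 : range equality
  have hset : {t : ℤ | ∃ i : ℕ, 1 ≤ i ∧ t = g i} = {t : ℤ | ∃ i : ℕ, 1 ≤ i ∧ t = fAux η d e i} := by
    have hcs : {t : ℤ | ∃ i : ℕ, 1 ≤ i ∧ t = g i} = ηc.mayaZ := rfl
    have hc' : ηc.mayaZ = (fun t => t - 1) '' (η.mayaZ ∪ {PartitionSeq.maxNeg η.mayaZ}) := hc
    rw [hcs, hc', hmax]
    ext t
    constructor
    · rintro ⟨s, hs, rfl⟩
      rcases hs with ⟨i, hi1, rfl⟩ | hs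
      · rcases le_or_gt i e with h | h
        · exact ⟨i, hi1, by simp only [fAux, if_pos h]; ring⟩
        · refine ⟨i + 1, by omega, ?_⟩
          simp only [fAux, if_neg (show ¬ i + 1 ≤ e by omega),
            if_neg (show ¬ i + 1 = e + 1 by omega)]
          have h3 : i + 1 - 1 = i := by omega
          rw [h3]
          push_cast; ring
      · simp only [Set.mem_singleton_iff] at hs
        subst hs
        refine ⟨e + 1, by omega, ?_⟩
        simp only [fAux, if_neg (show ¬ e + 1 ≤ e by omega), if_pos rfl]
        push_cast; omega
    · rintro ⟨i, hi1, rfl⟩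
      simp only [fAux]
      rcases le_or_gt i e with h | h
      · rw [if_pos h]
        exact ⟨(η.part i : ℤ) - i, Or.inl ⟨i, hi1, rfl⟩, by ring⟩
      rcases Nat.eq_or_lt_of_le h with h' | h'
      · rw [if_neg (by omega), if_pos (by omega)]
        refine ⟨m, Or.inr rfl, ?_⟩
        simp only [hmdef]
        push_cast; omega
      · rw [if_neg (by omega), if_neg (by omega)]
        refine ⟨(η.part (i - 1) : ℤ) - (i - 1 : ℕ), Or.inl ⟨i - 1, by omega, rfl⟩, ?_⟩
        have h3 : ((i - 1 : ℕ) : ℤ) = (i : ℤ) - 1 := by omega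
        rw [h3]; ring
  have key : ∀ i : ℕ, 1 ≤ i → g i = fAux η d e i := sa_key g (fAux η d e) hg hf hset
  -- Step 4 : extract the three statements
  refine ⟨?_, ?_, ?_⟩
  · intro i hi1 hi2
    have h1 := key i hi1
    have h2 := hle i hi2
    simp only [hgdef, fAux, if_pos hi2] at h1
    omega
  · have h1 := key (e + 1) (by omega)
    simp only [hgdef, fAux, if_neg (show ¬ e + 1 ≤ e by omega), if_pos rfl] at h1
    push_cast at h1
    omega
  · intro i hi
    have h1 := key i (by omega)
    simp only [hgdef, fAux, if_neg (show ¬ i ≤ e by omega),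
      if_neg (show ¬ i = e + 1 by omega)] at h1
    omega
end

section
/- Let η be a nonempty partition. Then the parts of η^{rc} are given by: η^{rc}_i = η_i if i < d(η), η^{rc}_i = d(η) − 1 if d(η) ≤ i ≤ d̃(η), and η^{rc}_i = η_i if i > d̃(η). -/
/-- A partition `η`, given by its parts `η.part i` for `i ≥ 1` (indexed from 1;
by convention `part 0 = part 1`), weakly decreasing and eventually zero. -/
structure MayaPartition where
  part : ℕ → ℕ
  antitone : ∀ ⦃i j : ℕ⦄, i ≤ j → part j ≤ part i
  exists_zero : ∃ N, part N = 0
  head : part 0 = part 1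

namespace MayaPartition

/-- The Maya diagram of `η` in the ℤ-model: an integer `t` represents the
half-integer `t + 1/2`, so `mayaZ η` encodes `S(η) = {η_i − i + 1/2 | i ≥ 1}`. -/
def mayaZ (η : MayaPartition) : Set ℤ := {t | ∃ i : ℕ, 1 ≤ i ∧ t = (η.part i : ℤ) - (i : ℤ)}

/-- `ℓ(η)`: the number of nonzero parts. -/
noncomputable def len (η : MayaPartition) : ℕ := sSup {i | η.part i ≠ 0}

/-- `d(η) = max {i : η_i ≥ i}` (Durfee square size), `0` for the empty partition. -/
noncomputable def durfee (η : MayaPartition) : ℕ := sSup {i | i ≤ η.part i}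

/-- `d̃(η) = max {i : η_i ≥ d(η)}`. -/
noncomputable def dtil (η : MayaPartition) : ℕ := sSup {i | η.durfee ≤ η.part i}

/-- `min S⁺`: the least element of `S` representing a positive half-integer. -/
noncomputable def minPos (S : Set ℤ) : ℤ := sInf {t | t ∈ S ∧ 0 ≤ t}

/-- `max S⁻`: the greatest element not in `S` representing a negative half-integer. -/
noncomputable def maxNeg (S : Set ℤ) : ℤ := sSup {t | t ∉ S ∧ t < 0}

/-- `ηr = η^r`: defined by `S(η^r) = {t+1 | t ∈ S(η) \ {min S(η)⁺}}`. -/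
def IsR (η ηr : MayaPartition) : Prop :=
  mayaZ ηr = (fun t => t + 1) '' (mayaZ η \ {minPos (mayaZ η)})

/-- `ηc = η^c`: defined by `S(η^c) = {t−1 | t ∈ S(η) ∪ {max S(η)⁻}}`. -/
def IsC (η ηc : MayaPartition) : Prop :=
  mayaZ ηc = (fun t => t - 1) '' (mayaZ η ∪ {maxNeg (mayaZ η)})

/-- `ηrc = η^{rc}`: defined by `S(η^{rc}) = (S(η) \ {min S(η)⁺}) ∪ {max S(η)⁻}`. -/
def IsRC (η ηrc : MayaPartition) : Prop :=
  mayaZ ηrc = (mayaZ η \ {minPos (mayaZ η)}) ∪ {maxNeg (mayaZ η)}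

/-- `ηc = η′` is the conjugate partition: `η′_j = |{i ≥ 1 : η_i ≥ j}|`. -/
def IsConj (η ηc : MayaPartition) : Prop :=
  ∀ j : ℕ, 1 ≤ j → ηc.part j = Set.ncard {i : ℕ | 1 ≤ i ∧ j ≤ η.part i}

/-- `|η|`: the sum of the parts. -/
noncomputable def size (η : MayaPartition) : ℕ := ∑ i ∈ Finset.Icc 1 η.len, η.part i

end MayaPartition

namespace RCProof
open MayaPartition

variable {η : MayaPartition}

lemma durfee_spec (hne : η.part 1 ≠ 0) :
    1 ≤ η.durfee ∧ η.durfee ≤ η.part η.durfee ∧ ∀ i, η.durfee < i → η.part i < i := by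
  have hbdd : BddAbove {i | i ≤ η.part i} := by
    refine ⟨η.part 1, fun i hi => ?_⟩
    calc i ≤ η.part i := hi
    _ ≤ η.part 0 := η.antitone (Nat.zero_le i)
    _ = η.part 1 := η.head
  have hne1 : (1 : ℕ) ∈ {i | i ≤ η.part i} := Nat.one_le_iff_ne_zero.2 hne
  have hmem := Nat.sSup_mem ⟨1, hne1⟩ hbdd
  refine ⟨le_csSup hbdd hne1, hmem, fun i hi => ?_⟩
  by_contra h
  exact absurd (le_csSup hbdd (not_lt.1 h : i ≤ η.part i)) (not_le.2 hi)

lemma dtil_spec (hne : η.part 1 ≠ 0) :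
    η.durfee ≤ η.dtil ∧ η.durfee ≤ η.part η.dtil ∧
      ∀ i, η.dtil < i → η.part i < η.durfee := by
  obtain ⟨h1, h2, h3⟩ := durfee_spec hne
  obtain ⟨N, hN⟩ := η.exists_zero
  have hbdd : BddAbove {i | η.durfee ≤ η.part i} := by
    refine ⟨N, fun i hi => ?_⟩
    have hi' : η.durfee ≤ η.part i := hi
    by_contra h
    have := η.antitone (le_of_lt (not_le.1 h))
    omega
  have hmemd : η.durfee ∈ {i | η.durfee ≤ η.part i} := h2
  have hmem := Nat.sSup_mem ⟨_, hmemd⟩ hbdd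
  refine ⟨le_csSup hbdd hmemd, hmem, fun i hi => ?_⟩
  by_contra h
  exact absurd (le_csSup hbdd (not_lt.1 h : η.durfee ≤ η.part i)) (not_le.2 hi)

/-- the main bundle of facts about `d` and `d̃`. -/
lemma facts (hne : η.part 1 ≠ 0) :
    1 ≤ η.durfee ∧ η.durfee ≤ η.dtil ∧
    (∀ i, i ≤ η.durfee → η.durfee ≤ η.part i ∧ i ≤ η.part i) ∧
    (∀ i, η.durfee < i → i ≤ η.dtil → η.part i = η.durfee) ∧
    (∀ i, η.dtil < i → η.part i < η.durfee) := by
  obtain ⟨h1, h2, h3⟩ := durfee_spec hne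
  obtain ⟨h4, h5, h6⟩ := dtil_spec hne
  refine ⟨h1, h4, fun i hi => ?_, fun i hdi hiD => ?_, h6⟩
  · have := η.antitone hi
    exact ⟨by omega, by omega⟩
  · have hub : η.part i ≤ η.part (η.durfee + 1) := η.antitone (by omega)
    have h3' := h3 (η.durfee + 1) (by omega)
    have hlb : η.part η.dtil ≤ η.part i := η.antitone hiD
    omega

lemma minPos_eq (hne : η.part 1 ≠ 0) :
    minPos η.mayaZ = (η.part η.durfee : ℤ) - η.durfee := by
  obtain ⟨h1, h2, h3⟩ := durfee_spec hne
  have hmem : (η.part η.durfee : ℤ) - η.durfee ∈ {t | t ∈ η.mayaZ ∧ 0 ≤ t} :=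
    ⟨⟨η.durfee, h1, rfl⟩, by omega⟩
  have hlb : ∀ t ∈ {t | t ∈ η.mayaZ ∧ 0 ≤ t}, (η.part η.durfee : ℤ) - η.durfee ≤ t := by
    rintro t ⟨⟨i, hi1, rfl⟩, ht0⟩
    have hid : i ≤ η.durfee := by
      by_contra h
      have := h3 i (not_le.1 h)
      omega
    have := η.antitone hid
    omega
  exact le_antisymm (csInf_le ⟨_, hlb⟩ hmem) (le_csInf ⟨_, hmem⟩ hlb)

lemma maxNeg_eq (hne : η.part 1 ≠ 0) :
    maxNeg η.mayaZ = (η.durfee : ℤ) - 1 - η.dtil := by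
  obtain ⟨h1, h4, h7, h8, h6⟩ := facts hne
  have hmem : ((η.durfee : ℤ) - 1 - η.dtil) ∈ {t | t ∉ η.mayaZ ∧ t < 0} := by
    refine ⟨?_, by omega⟩
    rintro ⟨i, hi1, heq⟩
    rcases le_or_gt i η.durfee with hc | hc
    · have := (h7 i hc).2
      omega
    · rcases le_or_gt i η.dtil with hc2 | hc2
      · have := h8 i hc hc2
        omega
      · have := h6 i hc2
        omega
  have hub : ∀ t ∈ {t | t ∉ η.mayaZ ∧ t < 0}, t ≤ (η.durfee : ℤ) - 1 - η.dtil := by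
    rintro t ⟨htS, ht0⟩
    by_contra h
    push_neg at h
    set n : ℕ := ((η.durfee : ℤ) - t).toNat with hn
    have hn' : (n : ℤ) = (η.durfee : ℤ) - t := Int.toNat_of_nonneg (by omega)
    have hdn : η.durfee < n := by omega
    have hnD : n ≤ η.dtil := by omega
    have := h8 n hdn hnD
    exact htS ⟨n, by omega, by omega⟩
  exact le_antisymm (csSup_le ⟨_, hmem⟩ hub) (le_csSup ⟨_, hub⟩ hmem)

lemma upperSet_eq (ν : MayaPartition) (k : ℕ) (hk : 1 ≤ k) :
    {x | x ∈ ν.mayaZ ∧ (ν.part k : ℤ) - k ≤ x}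
      = (fun i : ℕ => (ν.part i : ℤ) - i) '' Set.Icc 1 k := by
  ext x
  constructor
  · rintro ⟨⟨i, hi1, rfl⟩, hle⟩
    refine ⟨i, ⟨hi1, ?_⟩, rfl⟩
    by_contra h
    have hki : k ≤ i := (not_le.1 h).le
    have := ν.antitone hki
    omega
  · rintro ⟨i, ⟨hi1, hik⟩, rfl⟩
    have := ν.antitone hik
    refine ⟨⟨i, hi1, rfl⟩, ?_⟩
    simp only
    omega

lemma upperSet_ncard (ν : MayaPartition) (k : ℕ) (hk : 1 ≤ k) :
    Set.ncard {x | x ∈ ν.mayaZ ∧ (ν.part k : ℤ) - k ≤ x} = k := by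
  rw [upperSet_eq ν k hk]
  rw [Set.ncard_image_of_injOn, ← Finset.coe_Icc, Set.ncard_coe_finset, Nat.card_Icc]
  · omega
  · intro a _ b _ hab
    by_contra hne'
    rcases Nat.lt_or_ge a b with h | h
    · have := ν.antitone h.le
      simp only at hab
      omega
    · have hba : b < a := by omega
      have := ν.antitone hba.le
      simp only at hab
      omega

lemma part_eq_of_mayaZ_eq {ν μ : MayaPartition} (h : ν.mayaZ = μ.mayaZ) (k : ℕ) (hk : 1 ≤ k) :
    ν.part k = μ.part k := by
  have main : ∀ (α β : MayaPartition), α.mayaZ = β.mayaZ →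
      (α.part k : ℤ) - k ≤ (β.part k : ℤ) - k → β.part k ≤ α.part k := by
    intro α β hS hle
    have hA := upperSet_ncard α k hk
    have hB := upperSet_ncard β k hk
    have hsub : {x | x ∈ β.mayaZ ∧ (β.part k : ℤ) - k ≤ x}
        ⊆ {x | x ∈ α.mayaZ ∧ (α.part k : ℤ) - k ≤ x} := by
      rintro x ⟨hx, hsx⟩
      exact ⟨hS ▸ hx, le_trans hle hsx⟩
    have hfin : {x | x ∈ α.mayaZ ∧ (α.part k : ℤ) - k ≤ x}.Finite := by
      rw [upperSet_eq α k hk]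
      exact (Set.finite_Icc 1 k).image _
    have heq := Set.eq_of_subset_of_ncard_le hsub (by rw [hA, hB]) hfin
    have ht : ((α.part k : ℤ) - k) ∈ {x | x ∈ β.mayaZ ∧ (β.part k : ℤ) - k ≤ x} := by
      rw [heq]
      exact ⟨⟨k, hk, rfl⟩, le_refl _⟩
    have := ht.2
    omega
  rcases le_total ((ν.part k : ℤ) - k) ((μ.part k : ℤ) - k) with hle | hle
  · have := main ν μ h hle
    omega
  · have := main μ ν h.symm hle
    omega

/-- The claimed part function of `η^{rc}` (for indices `≥ 1`). -/
noncomputable def g (η : MayaPartition) (x : ℕ) : ℕ :=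
  if x < η.durfee then η.part x else if x ≤ η.dtil then η.durfee - 1 else η.part x

lemma g_antitone (hne : η.part 1 ≠ 0) :
    ∀ a b : ℕ, 1 ≤ a → a ≤ b → g η b ≤ g η a := by
  obtain ⟨h1, h4, h7, h8, h6⟩ := facts hne
  intro a b ha hab
  by_cases hB : b < η.durfee
  · have hA : a < η.durfee := lt_of_le_of_lt hab hB
    simp only [g, if_pos hA, if_pos hB]
    exact η.antitone hab
  · by_cases hB2 : b ≤ η.dtil
    · by_cases hA : a < η.durfee
      · have := (h7 a hA.le).1
        simp only [g, if_pos hA, if_neg hB, if_pos hB2]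
        omega
      · have hA2 : a ≤ η.dtil := le_trans hab hB2
        simp only [g, if_neg hA, if_neg hB, if_pos hA2, if_pos hB2]
        exact le_refl _
    · have hb6 := h6 b (not_le.1 hB2)
      by_cases hA : a < η.durfee
      · simp only [g, if_pos hA, if_neg hB, if_neg hB2]
        exact η.antitone hab
      · by_cases hA2 : a ≤ η.dtil
        · simp only [g, if_neg hA, if_neg hB, if_pos hA2, if_neg hB2]
          omega
        · simp only [g, if_neg hA, if_neg hA2, if_neg hB, if_neg hB2]
          exact η.antitone hab

/-- The candidate partition `η^{rc}`. -/
noncomputable def cand (η : MayaPartition) (hne : η.part 1 ≠ 0) : MayaPartition where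
  part i := g η (max i 1)
  antitone := by
    intro i j hij
    exact g_antitone hne (max i 1) (max j 1) (le_max_right i 1) (max_le_max hij le_rfl)
  exists_zero := by
    obtain ⟨N, hN⟩ := η.exists_zero
    obtain ⟨h1, h4, h7, h8, h6⟩ := facts hne
    refine ⟨N + η.dtil + 1, ?_⟩
    have hmax : max (N + η.dtil + 1) 1 = N + η.dtil + 1 := by omega
    have hpz : η.part (N + η.dtil + 1) = 0 := by
      have := η.antitone (show N ≤ N + η.dtil + 1 by omega)
      omega
    show g η (max (N + η.dtil + 1) 1) = 0
    rw [hmax]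
    simp only [g, if_neg (show ¬ N + η.dtil + 1 < η.durfee by omega),
      if_neg (show ¬ N + η.dtil + 1 ≤ η.dtil by omega)]
    exact hpz
  head := by norm_num

lemma cand_part (hne : η.part 1 ≠ 0) {i : ℕ} (hi : 1 ≤ i) :
    (cand η hne).part i = g η i := by
  simp only [cand, max_eq_left hi]

lemma mayaZ_cand (hne : η.part 1 ≠ 0) :
    (cand η hne).mayaZ = (η.mayaZ \ {minPos η.mayaZ}) ∪ {maxNeg η.mayaZ} := by
  rw [minPos_eq hne, maxNeg_eq hne]
  obtain ⟨h1, h4, h7, h8, h6⟩ := facts hne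
  have hdd := (h7 η.durfee le_rfl).1
  ext t
  simp only [Set.mem_union, Set.mem_diff, Set.mem_singleton_iff, Set.mem_setOf_eq, mayaZ]
  constructor
  · rintro ⟨i, hi1, rfl⟩
    rw [cand_part hne hi1]
    by_cases hA : i < η.durfee
    · have := η.antitone hA.le
      simp only [g, if_pos hA]
      exact Or.inl ⟨⟨i, hi1, rfl⟩, by omega⟩
    · by_cases hA2 : i ≤ η.dtil
      · simp only [g, if_neg hA, if_pos hA2]
        rcases eq_or_lt_of_le hA2 with heq | hlt
        · subst heq
          exact Or.inr (by omega)
        · have hp := h8 (i + 1) (by omega) (by omega)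
          exact Or.inl ⟨⟨i + 1, by omega, by omega⟩, by omega⟩
      · have := h6 i (not_le.1 hA2)
        simp only [g, if_neg hA, if_neg hA2]
        exact Or.inl ⟨⟨i, hi1, rfl⟩, by omega⟩
  · rintro (⟨⟨j, hj1, rfl⟩, hnem⟩ | ht)
    · by_cases hA : j < η.durfee
      · refine ⟨j, hj1, ?_⟩
        rw [cand_part hne hj1]
        simp only [g, if_pos hA]
      · rcases eq_or_lt_of_le (not_lt.1 hA) with heq | hlt
        · exact absurd (by rw [heq]) hnem
        · by_cases hA2 : j ≤ η.dtil
          · have hp := h8 j hlt hA2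
            refine ⟨j - 1, by omega, ?_⟩
            rw [cand_part hne (by omega)]
            simp only [g, if_neg (show ¬ j - 1 < η.durfee by omega),
              if_pos (show j - 1 ≤ η.dtil by omega)]
            omega
          · refine ⟨j, hj1, ?_⟩
            rw [cand_part hne hj1]
            simp only [g, if_neg (show ¬ j < η.durfee by omega), if_neg hA2]
    · refine ⟨η.dtil, by omega, ?_⟩
      rw [cand_part hne (by omega)]
      simp only [g, if_neg (show ¬ η.dtil < η.durfee by omega),
        if_pos (le_refl η.dtil)]
      omega

end RCProof

/-- Parts of `η^{rc}`: `η^{rc}_i = η_i` for `i < d(η)`, `η^{rc}_i = d(η) − 1` for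
`d(η) ≤ i ≤ d̃(η)`, and `η^{rc}_i = η_i` for `i > d̃(η)`. -/
theorem parts_of_rc (η ηrc : MayaPartition) (hne : η.part 1 ≠ 0) (hrc : η.IsRC ηrc)
    (i : ℕ) (hi : 1 ≤ i) :
    (i < η.durfee → ηrc.part i = η.part i) ∧
    (η.durfee ≤ i → i ≤ η.dtil → ηrc.part i = η.durfee - 1) ∧
    (η.dtil < i → ηrc.part i = η.part i) := by
  have hrc' : ηrc.mayaZ = (η.mayaZ \ {MayaPartition.minPos η.mayaZ}) ∪ {MayaPartition.maxNeg η.mayaZ} := hrc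
  have hSeq : ηrc.mayaZ = (RCProof.cand η hne).mayaZ := by
    rw [hrc', RCProof.mayaZ_cand hne]
  have hpart := RCProof.part_eq_of_mayaZ_eq hSeq i hi
  rw [RCProof.cand_part hne hi] at hpart
  refine ⟨fun h => ?_, fun ha hb => ?_, fun h => ?_⟩
  · rw [hpart]; simp only [RCProof.g, if_pos h]
  · rw [hpart]; simp only [RCProof.g, if_neg (not_lt.2 ha), if_pos hb]
  · obtain ⟨h1, h4, h7, h8, h6⟩ := RCProof.facts hne
    rw [hpart]
    simp only [RCProof.g, if_neg (show ¬ i < η.durfee by omega), if_neg (not_le.2 h)]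
end

section
/- Let η be a nonempty partition. Then: (i) d(η^r) = d(η) iff η_{d(η)+1} = d(η), and d(η^r) = d(η) − 1 iff η_{d(η)+1} < d(η); (ii) d(η^c) = d(η) iff η_{d(η)} > d(η), and d(η^c) = d(η) − 1 iff η_{d(η)} = d(η); (iii) d(η^{rc}) = d(η) − 1. -/
namespace PartitionAux
open PartitionSeq Set

noncomputable def f (η : PartitionSeq) (i : ℕ) : ℤ := (η.part i : ℤ) - i

lemma f_strictAnti (η : PartitionSeq) : StrictAnti (f η) :=
  strictAnti_nat_of_succ_lt fun i => by
    have := η.antitone (Nat.le_add_right i 1)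
    simp only [f]; push_cast; omega

lemma f_injOn (η : PartitionSeq) (s : Set ℕ) : Set.InjOn (f η) s :=
  (f_strictAnti η).injective.injOn

lemma mem_mayaZ_iff (η : PartitionSeq) {t : ℤ} :
    t ∈ η.mayaZ ↔ ∃ i, 1 ≤ i ∧ t = f η i := Iff.rfl

lemma f_mem_mayaZ (η : PartitionSeq) {i : ℕ} (h : 1 ≤ i) : f η i ∈ η.mayaZ := ⟨i, h, rfl⟩

lemma bddAbove_dset (η : PartitionSeq) : BddAbove {i | i ≤ η.part i} := by
  obtain ⟨N, hN⟩ := η.exists_zero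
  refine ⟨N, fun i hi => ?_⟩
  by_contra h
  push_neg at h
  have := η.antitone h.le
  simp only [mem_setOf_eq] at hi
  omega

lemma durfee_mem (η : PartitionSeq) : η.durfee ≤ η.part η.durfee :=
  Nat.sSup_mem ⟨0, by simp⟩ (bddAbove_dset η)

lemma le_durfee (η : PartitionSeq) {i : ℕ} (h : i ≤ η.part i) : i ≤ η.durfee :=
  le_csSup (bddAbove_dset η) h

lemma durfee_lt (η : PartitionSeq) {i : ℕ} (h : η.durfee < i) : η.part i < i := by
  by_contra hc
  push_neg at hc
  exact absurd (le_durfee η hc) (by omega)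

lemma part_ge (η : PartitionSeq) {i : ℕ} (h : i ≤ η.durfee) : i ≤ η.part i :=
  le_trans (le_trans h (durfee_mem η)) (η.antitone h)

lemma f_nonneg (η : PartitionSeq) {i : ℕ} (h : i ≤ η.durfee) : 0 ≤ f η i := by
  have := part_ge η h
  simp only [f]; omega

lemma exists_index (η : PartitionSeq) {t : ℤ} (h : t ∈ η.mayaZ) (h0 : 0 ≤ t) :
    ∃ i, 1 ≤ i ∧ i ≤ η.durfee ∧ t = f η i := by
  obtain ⟨i, hi1, rfl⟩ := h
  refine ⟨i, hi1, le_durfee η ?_, rfl⟩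
  omega

lemma index_le_durfee (η : PartitionSeq) {i : ℕ} (h0 : 0 ≤ f η i) : i ≤ η.durfee := by
  refine le_durfee η ?_
  simp only [f] at h0
  omega

lemma nonneg_slice (η : PartitionSeq) :
    {t | t ∈ η.mayaZ ∧ 0 ≤ t} = f η '' Set.Icc 1 η.durfee := by
  ext t
  constructor
  · rintro ⟨ht, h0⟩
    obtain ⟨i, h1, h2, rfl⟩ := exists_index η ht h0
    exact ⟨i, ⟨h1, h2⟩, rfl⟩
  · rintro ⟨i, ⟨h1, h2⟩, rfl⟩
    exact ⟨f_mem_mayaZ η h1, f_nonneg η h2⟩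

lemma ncard_Icc' (a b : ℕ) : (Set.Icc a b).ncard = b + 1 - a := by
  rw [← Finset.coe_Icc, Set.ncard_coe_finset, Nat.card_Icc]

lemma durfee_eq (η : PartitionSeq) : η.durfee = {t | t ∈ η.mayaZ ∧ 0 ≤ t}.ncard := by
  rw [nonneg_slice, Set.ncard_image_of_injOn (f_injOn η _), ncard_Icc']
  omega

lemma ncard_image_shift (η : PartitionSeq) (c : ℤ) (A : Set ℕ) :
    ((fun i => f η i + c) '' A).ncard = A.ncard :=
  Set.ncard_image_of_injOn fun a _ b _ h =>
    (f_strictAnti η).injective (show f η a = f η b by omega)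

lemma gap_nonempty (η : PartitionSeq) (hne : η.part 1 ≠ 0) :
    {t | t ∉ η.mayaZ ∧ t < 0}.Nonempty := by
  by_contra h
  rw [Set.not_nonempty_iff_eq_empty] at h
  have hall : ∀ t : ℤ, t < 0 → t ∈ η.mayaZ := by
    intro t ht
    by_contra hc
    exact absurd (show t ∈ ({t | t ∉ η.mayaZ ∧ t < 0} : Set ℤ) from ⟨hc, ht⟩) (by simp [h])
  obtain ⟨N, hN⟩ := η.exists_zero
  have hN1 : 1 ≤ N := by
    rcases Nat.eq_zero_or_pos N with h0 | h0
    · rw [h0] at hN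
      rw [η.head] at hN
      exact absurd hN hne
    · exact h0
  have hd1 : 1 ≤ η.durfee := le_durfee η (Nat.one_le_iff_ne_zero.mpr hne)
  have key : ∀ k : ℕ, ∃ i : ℕ, k ∈ Finset.Icc 1 N →
      i ∈ Finset.Icc (η.durfee + 1) N ∧ (-(k : ℤ)) = f η i := by
    intro k
    by_cases hk : k ∈ Finset.Icc 1 N
    · simp only [Finset.mem_Icc] at hk
      obtain ⟨i, hi1, hi2⟩ := hall (-(k : ℤ)) (by omega)
      refine ⟨i, fun _ => ⟨?_, hi2⟩⟩
      simp only [Finset.mem_Icc]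
      constructor
      · by_contra hc
        push_neg at hc
        have := part_ge η (by omega : i ≤ η.durfee)
        omega
      · by_contra hc
        push_neg at hc
        have := η.antitone (by omega : N ≤ i)
        omega
    · exact ⟨0, fun hk' => absurd hk' hk⟩
  choose ι hι using key
  have hcard := Finset.card_le_card_of_injOn ι (fun k hk => (hι k hk).1) ?_
  · rw [Nat.card_Icc, Nat.card_Icc] at hcard
    omega
  · intro k1 hk1 k2 hk2 he
    have h1 := (hι k1 (by simpa using hk1)).2
    have h2 := (hι k2 (by simpa using hk2)).2
    rw [he] at h1
    rw [← h2] at h1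
    omega

end PartitionAux

open PartitionAux

/-- Durfee numbers of `η^r`, `η^c`, `η^{rc}`. -/
theorem durfee_of_modified (η ηr ηc ηrc : PartitionSeq) (hne : η.part 1 ≠ 0)
    (hr : η.IsR ηr) (hc : η.IsC ηc) (hrc : η.IsRC ηrc) :
    ((ηr.durfee = η.durfee ↔ η.part (η.durfee + 1) = η.durfee) ∧
     (ηr.durfee = η.durfee - 1 ↔ η.part (η.durfee + 1) < η.durfee)) ∧
    ((ηc.durfee = η.durfee ↔ η.durfee < η.part η.durfee) ∧
     (ηc.durfee = η.durfee - 1 ↔ η.part η.durfee = η.durfee)) ∧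
    ηrc.durfee = η.durfee - 1 := by
  classical
  set d := η.durfee with hdd
  have hd1 : 1 ≤ d := le_durfee η (Nat.one_le_iff_ne_zero.mpr hne)
  have hr' : ηr.mayaZ = (fun t => t + 1) '' (η.mayaZ \ {PartitionSeq.minPos η.mayaZ}) := hr
  have hc' : ηc.mayaZ = (fun t => t - 1) '' (η.mayaZ ∪ {PartitionSeq.maxNeg η.mayaZ}) := hc
  have hrc' : ηrc.mayaZ = (η.mayaZ \ {PartitionSeq.minPos η.mayaZ}) ∪ {PartitionSeq.maxNeg η.mayaZ} := hrc
  -- minPos = f η d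
  have hlb : ∀ t ∈ {t | t ∈ η.mayaZ ∧ 0 ≤ t}, f η d ≤ t := by
    rintro t ⟨ht, h0⟩
    obtain ⟨i, h1, h2, rfl⟩ := exists_index η ht h0
    exact (f_strictAnti η).antitone h2
  have hmmem : f η d ∈ {t | t ∈ η.mayaZ ∧ 0 ≤ t} :=
    ⟨f_mem_mayaZ η hd1, f_nonneg η le_rfl⟩
  have hm : PartitionSeq.minPos η.mayaZ = f η d :=
    le_antisymm (csInf_le ⟨_, hlb⟩ hmmem) (le_csInf ⟨_, hmmem⟩ hlb)
  -- maxNeg facts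
  have hgmem : PartitionSeq.maxNeg η.mayaZ ∉ η.mayaZ ∧ PartitionSeq.maxNeg η.mayaZ < 0 :=
    Int.csSup_mem (gap_nonempty η hne) ⟨0, fun t ht => ht.2.le⟩
  obtain ⟨hgS, hg0⟩ := hgmem
  have hfd0 : 0 ≤ f η d := f_nonneg η le_rfl
  have hplt : η.part (d + 1) < d + 1 := durfee_lt η (lt_add_one d)
  have hpge : d ≤ η.part d := durfee_mem η
  -- (rc)
  have hrcval : ηrc.durfee = d - 1 := by
    rw [durfee_eq]
    have hset : {t | t ∈ ηrc.mayaZ ∧ 0 ≤ t} = f η '' Set.Icc 1 (d - 1) := by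
      rw [hrc']
      ext t
      simp only [Set.mem_union, Set.mem_diff, Set.mem_singleton_iff, Set.mem_setOf_eq,
        Set.mem_image, Set.mem_Icc, hm]
      constructor
      · rintro ⟨⟨htS, htm⟩ | rfl, h0⟩
        · obtain ⟨i, h1, h2, rfl⟩ := exists_index η htS h0
          refine ⟨i, ⟨h1, ?_⟩, rfl⟩
          have : i ≠ d := fun hid => htm (by rw [hid])
          omega
        · omega
      · rintro ⟨i, ⟨h1, h2⟩, rfl⟩
        refine ⟨Or.inl ⟨f_mem_mayaZ η h1, ?_⟩, f_nonneg η (by omega)⟩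
        exact fun he => (by omega : i ≠ d) ((f_strictAnti η).injective he)
    rw [hset, Set.ncard_image_of_injOn (f_injOn η _), ncard_Icc']
    omega
  -- (r)
  have hrfact : (η.part (d + 1) = d ∧ ηr.durfee = d) ∨
      (η.part (d + 1) < d ∧ ηr.durfee = d - 1) := by
    by_cases hcase : η.part (d + 1) = d
    · left
      refine ⟨hcase, ?_⟩
      have hfd1 : f η (d + 1) = -1 := by simp only [f]; push_cast; omega
      rw [durfee_eq]
      have hset : {t | t ∈ ηr.mayaZ ∧ 0 ≤ t} =
          (fun i => f η i + 1) '' (Set.Icc 1 (d + 1) \ {d}) := by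
        rw [hr']
        ext t
        simp only [Set.mem_image, Set.mem_diff, Set.mem_singleton_iff, Set.mem_setOf_eq,
          Set.mem_Icc, hm]
        constructor
        · rintro ⟨⟨s, ⟨hsS, hsm⟩, rfl⟩, h0⟩
          obtain ⟨i, hi1, rfl⟩ := (mem_mayaZ_iff η).mp hsS
          refine ⟨i, ⟨⟨hi1, ?_⟩, fun hid => hsm (by rw [hid])⟩, rfl⟩
          by_contra hcon
          push_neg at hcon
          have := (f_strictAnti η) (show d + 1 < i by omega)
          omega
        · rintro ⟨i, ⟨⟨h1, h2⟩, h3⟩, rfl⟩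
          have hge : f η (d + 1) ≤ f η i := (f_strictAnti η).antitone h2
          exact ⟨⟨f η i, ⟨f_mem_mayaZ η h1,
            fun he => h3 ((f_strictAnti η).injective he)⟩, rfl⟩, by omega⟩
      rw [hset, ncard_image_shift,
        Set.ncard_diff_singleton_of_mem (show d ∈ Set.Icc 1 (d + 1) by simp only [Set.mem_Icc]; omega), ncard_Icc']
      omega
    · right
      refine ⟨by omega, ?_⟩
      have hfd1 : f η (d + 1) < -1 := by simp only [f]; push_cast; omega
      rw [durfee_eq]
      have hset : {t | t ∈ ηr.mayaZ ∧ 0 ≤ t} =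
          (fun i => f η i + 1) '' Set.Icc 1 (d - 1) := by
        rw [hr']
        ext t
        simp only [Set.mem_image, Set.mem_diff, Set.mem_singleton_iff, Set.mem_setOf_eq,
          Set.mem_Icc, hm]
        constructor
        · rintro ⟨⟨s, ⟨hsS, hsm⟩, rfl⟩, h0⟩
          obtain ⟨i, hi1, rfl⟩ := (mem_mayaZ_iff η).mp hsS
          have hile : i ≤ d := by
            by_contra hcon
            push_neg at hcon
            have := (f_strictAnti η).antitone (show d + 1 ≤ i by omega)
            omega
          have : i ≠ d := fun hid => hsm (by rw [hid])
          exact ⟨i, ⟨hi1, by omega⟩, rfl⟩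
        · rintro ⟨i, ⟨h1, h2⟩, rfl⟩
          have hge : 0 ≤ f η i := f_nonneg η (by omega)
          refine ⟨⟨f η i, ⟨f_mem_mayaZ η h1,
            fun he => (by omega : i ≠ d) ((f_strictAnti η).injective he)⟩, rfl⟩, by omega⟩
      rw [hset, ncard_image_shift, ncard_Icc']
      omega
  -- (c)
  have hcfact : (η.part d = d ∧ ηc.durfee = d - 1) ∨
      (d < η.part d ∧ ηc.durfee = d) := by
    have himg : ∀ A : Set ℕ, (fun i => f η i - 1) '' A = (fun i => f η i + (-1)) '' A := by
      intro A
      ext t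
      simp only [Set.mem_image]
      constructor
      · rintro ⟨i, hi, rfl⟩; exact ⟨i, hi, by ring⟩
      · rintro ⟨i, hi, rfl⟩; exact ⟨i, hi, by ring⟩
    by_cases hcase : η.part d = d
    · left
      refine ⟨hcase, ?_⟩
      have hfdz : f η d = 0 := by simp only [f]; omega
      rw [durfee_eq]
      have hset : {t | t ∈ ηc.mayaZ ∧ 0 ≤ t} =
          (fun i => f η i - 1) '' Set.Icc 1 (d - 1) := by
        rw [hc']
        ext t
        simp only [Set.mem_image, Set.mem_union, Set.mem_singleton_iff, Set.mem_setOf_eq,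
          Set.mem_Icc]
        constructor
        · rintro ⟨⟨s, hsS | rfl, rfl⟩, h0⟩
          · obtain ⟨i, hi1, rfl⟩ := (mem_mayaZ_iff η).mp hsS
            have hile : i ≤ d := index_le_durfee η (by omega)
            have : i ≠ d := by
              intro hid
              rw [hid, hfdz] at h0
              omega
            exact ⟨i, ⟨hi1, by omega⟩, rfl⟩
          · omega
        · rintro ⟨i, ⟨h1, h2⟩, rfl⟩
          have hgt : f η d < f η i := (f_strictAnti η) (by omega)
          exact ⟨⟨f η i, Or.inl (f_mem_mayaZ η h1), rfl⟩, by omega⟩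
      rw [hset, himg, ncard_image_shift, ncard_Icc']
      omega
    · right
      refine ⟨by omega, ?_⟩
      have hfdp : 1 ≤ f η d := by simp only [f]; omega
      rw [durfee_eq]
      have hset : {t | t ∈ ηc.mayaZ ∧ 0 ≤ t} =
          (fun i => f η i - 1) '' Set.Icc 1 d := by
        rw [hc']
        ext t
        simp only [Set.mem_image, Set.mem_union, Set.mem_singleton_iff, Set.mem_setOf_eq,
          Set.mem_Icc]
        constructor
        · rintro ⟨⟨s, hsS | rfl, rfl⟩, h0⟩
          · obtain ⟨i, hi1, rfl⟩ := (mem_mayaZ_iff η).mp hsS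
            exact ⟨i, ⟨hi1, index_le_durfee η (by omega)⟩, rfl⟩
          · omega
        · rintro ⟨i, ⟨h1, h2⟩, rfl⟩
          have hge : f η d ≤ f η i := (f_strictAnti η).antitone h2
          exact ⟨⟨f η i, Or.inl (f_mem_mayaZ η h1), rfl⟩, by omega⟩
      rw [hset, himg, ncard_image_shift, ncard_Icc']
      omega
  rcases hrfact with ⟨h1, h2⟩ | ⟨h1, h2⟩ <;> rcases hcfact with ⟨h3, h4⟩ | ⟨h3, h4⟩ <;>
    refine ⟨⟨?_, ?_⟩, ⟨?_, ?_⟩, ?_⟩ <;> omega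
end

section
/- Let η be a nonempty partition. If d(η) > 1 and d(η^r) = d(η) − 1, then d̃(η) = d(η); if d(η) > 1 and d(η^r) = d(η), then d̃(η) ≥ d(η) + 1 and η_i = d(η) for all d(η)+1 ≤ i ≤ d̃(η). -/
/-- A partition `η`, given by its parts `η.part i` for `i ≥ 1` (indexed from 1;
by convention `part 0 = part 1`), weakly decreasing and eventually zero. -/
structure PartitionN where
  part : ℕ → ℕ
  antitone : ∀ ⦃i j : ℕ⦄, i ≤ j → part j ≤ part i
  exists_zero : ∃ N, part N = 0
  head : part 0 = part 1

namespace PartitionN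

/-- The Maya diagram of `η` in the ℤ-model: an integer `t` represents the
half-integer `t + 1/2`, so `mayaZ η` encodes `S(η) = {η_i − i + 1/2 | i ≥ 1}`. -/
def mayaZ (η : PartitionN) : Set ℤ := {t | ∃ i : ℕ, 1 ≤ i ∧ t = (η.part i : ℤ) - (i : ℤ)}

/-- `ℓ(η)`: the number of nonzero parts. -/
noncomputable def len (η : PartitionN) : ℕ := sSup {i | η.part i ≠ 0}

/-- `d(η) = max {i : η_i ≥ i}` (Durfee square size), `0` for the empty partition. -/
noncomputable def durfee (η : PartitionN) : ℕ := sSup {i | i ≤ η.part i}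

/-- `d̃(η) = max {i : η_i ≥ d(η)}`. -/
noncomputable def dtil (η : PartitionN) : ℕ := sSup {i | η.durfee ≤ η.part i}

/-- `min S⁺`: the least element of `S` representing a positive half-integer. -/
noncomputable def minPos (S : Set ℤ) : ℤ := sInf {t | t ∈ S ∧ 0 ≤ t}

/-- `max S⁻`: the greatest element not in `S` representing a negative half-integer. -/
noncomputable def maxNeg (S : Set ℤ) : ℤ := sSup {t | t ∉ S ∧ t < 0}

/-- `ηr = η^r`: defined by `S(η^r) = {t+1 | t ∈ S(η) \ {min S(η)⁺}}`. -/
def IsR (η ηr : PartitionN) : Prop :=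
  mayaZ ηr = (fun t => t + 1) '' (mayaZ η \ {minPos (mayaZ η)})

/-- `ηc = η^c`: defined by `S(η^c) = {t−1 | t ∈ S(η) ∪ {max S(η)⁻}}`. -/
def IsC (η ηc : PartitionN) : Prop :=
  mayaZ ηc = (fun t => t - 1) '' (mayaZ η ∪ {maxNeg (mayaZ η)})

/-- `ηrc = η^{rc}`: defined by `S(η^{rc}) = (S(η) \ {min S(η)⁺}) ∪ {max S(η)⁻}`. -/
def IsRC (η ηrc : PartitionN) : Prop :=
  mayaZ ηrc = (mayaZ η \ {minPos (mayaZ η)}) ∪ {maxNeg (mayaZ η)}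

/-- `ηc = η′` is the conjugate partition: `η′_j = |{i ≥ 1 : η_i ≥ j}|`. -/
def IsConj (η ηc : PartitionN) : Prop :=
  ∀ j : ℕ, 1 ≤ j → ηc.part j = Set.ncard {i : ℕ | 1 ≤ i ∧ j ≤ η.part i}

/-- `|η|`: the sum of the parts. -/
noncomputable def size (η : PartitionN) : ℕ := ∑ i ∈ Finset.Icc 1 η.len, η.part i

end PartitionN

namespace PartitionAux

open PartitionN

/-- The map `i ↦ η_i − i` is strictly antitone. -/
lemma g_strictAnti (ξ : PartitionN) : StrictAnti (fun i : ℕ => (ξ.part i : ℤ) - i) := by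
  intro i j hij
  have h1 : ξ.part j ≤ ξ.part i := ξ.antitone hij.le
  simp only []
  have : (i : ℤ) < j := by exact_mod_cast hij
  omega

lemma g_inj (ξ : PartitionN) : Function.Injective (fun i : ℕ => (ξ.part i : ℤ) - i) :=
  (g_strictAnti ξ).injective

lemma durfee_bdd (ξ : PartitionN) : BddAbove {i : ℕ | i ≤ ξ.part i} :=
  ⟨ξ.part 0, fun i hi => hi.trans (ξ.antitone (Nat.zero_le i))⟩

lemma durfee_mem_s10 (ξ : PartitionN) : ξ.durfee ≤ ξ.part ξ.durfee :=
  Nat.sSup_mem (⟨0, Nat.zero_le _⟩ : Set.Nonempty {i : ℕ | i ≤ ξ.part i}) (durfee_bdd ξ)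

lemma le_durfee_s10 (ξ : PartitionN) {i : ℕ} (h : i ≤ ξ.part i) : i ≤ ξ.durfee :=
  le_csSup (durfee_bdd ξ) h

lemma part_lt_of_durfee_lt (ξ : PartitionN) {i : ℕ} (h : ξ.durfee < i) : ξ.part i < i := by
  by_contra hc
  exact absurd (le_durfee_s10 ξ (i := i) (by omega)) (by omega)

lemma dtil_bdd (ξ : PartitionN) (hne : ξ.part 1 ≠ 0) :
    BddAbove {i : ℕ | ξ.durfee ≤ ξ.part i} := by
  obtain ⟨N, hN⟩ := ξ.exists_zero
  have hd1 : 1 ≤ ξ.durfee := le_durfee_s10 ξ (Nat.one_le_iff_ne_zero.mpr hne)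
  refine ⟨N, fun i hi => ?_⟩
  by_contra hc
  have : ξ.part i ≤ ξ.part N := ξ.antitone (by omega)
  simp only [Set.mem_setOf_eq] at hi
  omega

lemma durfee_le_dtil (ξ : PartitionN) (hne : ξ.part 1 ≠ 0) : ξ.durfee ≤ ξ.dtil :=
  le_csSup (dtil_bdd ξ hne) (durfee_mem_s10 ξ)

lemma dtil_mem (ξ : PartitionN) (hne : ξ.part 1 ≠ 0) : ξ.durfee ≤ ξ.part ξ.dtil :=
  Nat.sSup_mem (⟨ξ.durfee, durfee_mem_s10 ξ⟩ : Set.Nonempty {i : ℕ | ξ.durfee ≤ ξ.part i})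
    (dtil_bdd ξ hne)

lemma le_dtil (ξ : PartitionN) (hne : ξ.part 1 ≠ 0) {i : ℕ} (h : ξ.durfee ≤ ξ.part i) :
    i ≤ ξ.dtil :=
  le_csSup (dtil_bdd ξ hne) h

/-- `minPos (S(η)) = η_d − d`. -/
lemma minPos_eq (ξ : PartitionN) (hne : ξ.part 1 ≠ 0) :
    minPos (mayaZ ξ) = (ξ.part ξ.durfee : ℤ) - ξ.durfee := by
  have hd1 : 1 ≤ ξ.durfee := le_durfee_s10 ξ (Nat.one_le_iff_ne_zero.mpr hne)
  have hdd := durfee_mem_s10 ξ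
  have hmem : (ξ.part ξ.durfee : ℤ) - ξ.durfee ∈ {t | t ∈ mayaZ ξ ∧ 0 ≤ t} := by
    refine ⟨⟨ξ.durfee, hd1, rfl⟩, ?_⟩
    omega
  have hlb : ∀ t ∈ {t : ℤ | t ∈ mayaZ ξ ∧ 0 ≤ t}, (ξ.part ξ.durfee : ℤ) - ξ.durfee ≤ t := by
    rintro t ⟨⟨i, hi1, rfl⟩, ht0⟩
    have hiD : i ≤ ξ.part i := by omega
    exact (g_strictAnti ξ).antitone (le_durfee_s10 ξ hiD)
  exact le_antisymm (csInf_le ⟨_, hlb⟩ hmem) (le_csInf ⟨_, hmem⟩ hlb)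

/-- The Maya diagram of `η^r`. -/
lemma mayaZ_r (η ηr : PartitionN) (hne : η.part 1 ≠ 0) (hr : η.IsR ηr) (t : ℤ) :
    t ∈ mayaZ ηr ↔ ∃ i : ℕ, 1 ≤ i ∧ i ≠ η.durfee ∧ t = (η.part i : ℤ) - i + 1 := by
  rw [hr, minPos_eq η hne]
  constructor
  · rintro ⟨s, ⟨⟨i, hi1, rfl⟩, hs⟩, rfl⟩
    refine ⟨i, hi1, ?_, rfl⟩
    intro hid
    exact hs (by simp [hid])
  · rintro ⟨i, hi1, hid, rfl⟩
    refine ⟨(η.part i : ℤ) - i, ⟨⟨i, hi1, rfl⟩, ?_⟩, rfl⟩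
    simp only [Set.mem_singleton_iff]
    intro he
    exact hid (g_inj η he)

/-- Counting lemma: a finset whose elements all come from `G` on `[a,b]` has card `≤ b+1−a`. -/
lemma card_le_of_image (S : Finset ℤ) (G : ℕ → ℤ) (hG : Function.Injective G)
    (a b : ℕ) (h : ∀ t ∈ S, ∃ i, a ≤ i ∧ i ≤ b ∧ t = G i) : S.card ≤ b + 1 - a := by
  classical
  have key : ∀ t ∈ S, sInf {i | a ≤ i ∧ i ≤ b ∧ t = G i} ∈ {i | a ≤ i ∧ i ≤ b ∧ t = G i} :=
    fun t ht => Nat.sInf_mem (h t ht)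
  calc S.card ≤ (Finset.Icc a b).card := by
        apply Finset.card_le_card_of_injOn (fun t => sInf {i | a ≤ i ∧ i ≤ b ∧ t = G i})
        · intro t ht
          obtain ⟨h1, h2, _⟩ := key t ht
          exact Finset.mem_Icc.mpr ⟨h1, h2⟩
        · intro t1 h1 t2 h2 he
          obtain ⟨_, _, e1⟩ := key t1 (by simpa using h1)
          obtain ⟨_, _, e2⟩ := key t2 (by simpa using h2)
          rw [e1, e2]
          exact congrArg G he
    _ = b + 1 - a := Nat.card_Icc a b

/-- Any finset of nonnegative elements of the Maya diagram has card at most the Durfee size. -/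
lemma card_le_durfee (ξ : PartitionN) (S : Finset ℤ)
    (hS : ∀ t ∈ S, t ∈ mayaZ ξ ∧ 0 ≤ t) : S.card ≤ ξ.durfee := by
  have := card_le_of_image S (fun i => (ξ.part i : ℤ) - i) (g_inj ξ) 1 ξ.durfee ?_
  · omega
  · intro t ht
    obtain ⟨⟨i, hi1, rfl⟩, ht0⟩ := hS t ht
    exact ⟨i, hi1, le_durfee_s10 ξ (by omega), rfl⟩

/-- There is a finset of nonnegative Maya elements of full Durfee size. -/
lemma exists_durfee_finset (ξ : PartitionN) :
    ∃ S : Finset ℤ, (∀ t ∈ S, t ∈ mayaZ ξ ∧ 0 ≤ t) ∧ S.card = ξ.durfee := by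
  refine ⟨(Finset.Icc 1 ξ.durfee).image (fun i => (ξ.part i : ℤ) - i), ?_, ?_⟩
  · intro t ht
    simp only [Finset.mem_image, Finset.mem_Icc] at ht
    obtain ⟨i, ⟨hi1, hid⟩, rfl⟩ := ht
    refine ⟨⟨i, hi1, rfl⟩, ?_⟩
    have h1 : ξ.part ξ.durfee ≤ ξ.part i := ξ.antitone hid
    have h2 := durfee_mem_s10 ξ
    omega
  · rw [Finset.card_image_of_injective _ (g_inj ξ), Nat.card_Icc]
    omega

end PartitionAux

open PartitionAux

/-- If `d(η) > 1` and `d(η^r) = d(η) − 1` then `d̃(η) = d(η)`; if `d(η) > 1` and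
`d(η^r) = d(η)` then `d̃(η) ≥ d(η) + 1` and `η_i = d(η)` for `d(η)+1 ≤ i ≤ d̃(η)`. -/
theorem dtil_from_durfee_r (η ηr : PartitionN) (hne : η.part 1 ≠ 0)
    (hr : η.IsR ηr) (hd : 1 < η.durfee) :
    (ηr.durfee = η.durfee - 1 → η.dtil = η.durfee) ∧
    (ηr.durfee = η.durfee →
      η.durfee + 1 ≤ η.dtil ∧
      ∀ i : ℕ, η.durfee + 1 ≤ i → i ≤ η.dtil → η.part i = η.durfee) := by
  set d := η.durfee with hd_def
  have hdd : d ≤ η.part d := durfee_mem_s10 η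
  have hd1p : η.part (d + 1) ≤ d := by
    have := part_lt_of_durfee_lt η (show d < d + 1 by omega)
    omega
  -- Claim B : if η_{d+1} ≥ d then d ≤ durfee(η^r)
  have claimB : d ≤ η.part (d + 1) → d ≤ ηr.durfee := by
    intro hge
    set F : Finset ℕ := Finset.Icc 1 (d - 1) ∪ {d + 1} with hF
    set G : ℕ → ℤ := fun i => (η.part i : ℤ) - i + 1 with hG
    have hGinj : Function.Injective G := by
      intro a b hab
      apply g_inj η
      have hab' : (η.part a : ℤ) - a + 1 = (η.part b : ℤ) - b + 1 := hab
      show (η.part a : ℤ) - a = (η.part b : ℤ) - b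
      omega
    have hFmem : ∀ i ∈ F, 1 ≤ i ∧ i ≠ d := by
      intro i hi
      simp only [hF, Finset.mem_union, Finset.mem_Icc, Finset.mem_singleton] at hi
      omega
    have hcard : (F.image G).card = d := by
      rw [Finset.card_image_of_injective _ hGinj, hF,
        Finset.card_union_of_disjoint (by simp [Finset.disjoint_singleton_right]),
        Nat.card_Icc]
      simp; omega
    have := card_le_durfee ηr (F.image G) ?_
    · omega
    · intro t ht
      simp only [Finset.mem_image] at ht
      obtain ⟨i, hiF, rfl⟩ := ht
      obtain ⟨hi1, hid⟩ := hFmem i hiF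
      refine ⟨(mayaZ_r η ηr hne hr _).mpr ⟨i, hi1, hid, rfl⟩, ?_⟩
      simp only [hF, Finset.mem_union, Finset.mem_Icc, Finset.mem_singleton] at hiF
      rcases hiF with ⟨_, hile⟩ | rfl
      · have h1 : η.part d ≤ η.part i := η.antitone (by omega)
        show (0 : ℤ) ≤ (η.part i : ℤ) - i + 1
        omega
      · show (0 : ℤ) ≤ (η.part (d + 1) : ℤ) - (d + 1 : ℕ) + 1
        push_cast
        omega
  -- Claim C : if η_{d+1} < d then durfee(η^r) ≤ d − 1
  have claimC : η.part (d + 1) < d → ηr.durfee ≤ d - 1 := by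
    intro hlt
    obtain ⟨S, hS, hScard⟩ := exists_durfee_finset ηr
    have hGinj : Function.Injective (fun i : ℕ => (η.part i : ℤ) - i + 1) := by
      intro a b hab
      apply g_inj η
      have hab' : (η.part a : ℤ) - a + 1 = (η.part b : ℤ) - b + 1 := hab
      show (η.part a : ℤ) - a = (η.part b : ℤ) - b
      omega
    have := card_le_of_image S (fun i => (η.part i : ℤ) - i + 1) hGinj 1 (d - 1) ?_
    · omega
    · intro t ht
      obtain ⟨hmem, ht0⟩ := hS t ht
      obtain ⟨i, hi1, hid, rfl⟩ := (mayaZ_r η ηr hne hr t).mp hmem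
      refine ⟨i, hi1, ?_, rfl⟩
      by_contra hc
      have hge : d + 1 ≤ i := by omega
      have h1 : η.part i ≤ η.part (d + 1) := η.antitone hge
      omega
  constructor
  · -- Case 1
    intro h1
    have hlt : η.part (d + 1) < d := by
      by_contra hc
      have := claimB (by omega)
      omega
    have hle : η.dtil ≤ d := by
      by_contra hc
      have h2 : η.part η.dtil ≤ η.part (d + 1) := η.antitone (by omega)
      have h3 := dtil_mem η hne
      omega
    exact le_antisymm hle (durfee_le_dtil η hne)
  · -- Case 2
    intro h2
    have hge : d ≤ η.part (d + 1) := by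
      by_contra hc
      have := claimC (by omega)
      omega
    have heq : η.part (d + 1) = d := by omega
    have hdt : d + 1 ≤ η.dtil := le_dtil η hne (by omega)
    refine ⟨hdt, fun i hi1 hi2 => ?_⟩
    have h3 : η.part i ≤ η.part (d + 1) := η.antitone hi1
    have h4 : η.part η.dtil ≤ η.part i := η.antitone hi2
    have h5 := dtil_mem η hne
    omega
end

section
/- For any nonempty partition η, conjugation intertwines the Maya-diagram operations: (η^c)′ = (η′)^r, (η^r)′ = (η′)^c, and (η^{rc})′ = (η′)^{rc}. -/
namespace ConjAux

/-- Maya diagram of a sequence indexed from 1. -/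
def mayaOf (a : ℕ → ℕ) : Set ℤ := {t | ∃ i : ℕ, 1 ≤ i ∧ t = (a i : ℤ) - (i : ℤ)}

lemma mayaOf_congr {a b : ℕ → ℕ} (h : ∀ i, 1 ≤ i → a i = b i) : mayaOf a = mayaOf b := by
  ext t
  constructor <;> rintro ⟨i, hi, rfl⟩ <;> exact ⟨i, hi, by rw [h i hi]⟩

lemma ncard_Icc (i : ℕ) : (Set.Icc 1 i).ncard = i := by
  rw [← Finset.coe_Icc, Set.ncard_coe_finset, Nat.card_Icc]; omega

lemma ncard_Ico (i : ℕ) : (Set.Ico 1 i).ncard = i - 1 := by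
  rw [← Finset.coe_Ico, Set.ncard_coe_finset, Nat.card_Ico]

/-- A finite downward-closed subset of `{1,2,...}` has `i ∈ S ↔ i ≤ |S|`. -/
lemma mem_iff_le_ncard {S : Set ℕ} (hfin : S.Finite)
    (h1 : ∀ i ∈ S, 1 ≤ i)
    (hdown : ∀ i ∈ S, ∀ i', 1 ≤ i' → i' ≤ i → i' ∈ S)
    {i : ℕ} (hi : 1 ≤ i) : i ∈ S ↔ i ≤ S.ncard := by
  constructor
  · intro hiS
    have hsub : Set.Icc 1 i ⊆ S := fun k hk => hdown i hiS k hk.1 hk.2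
    calc i = (Set.Icc 1 i).ncard := (ncard_Icc i).symm
      _ ≤ S.ncard := Set.ncard_le_ncard hsub hfin
  · intro hle
    by_contra hiS
    have hsub : S ⊆ Set.Ico 1 i := by
      intro k hk
      refine ⟨h1 k hk, ?_⟩
      by_contra hki
      exact hiS (hdown k hk i hi (by omega))
    have := Set.ncard_le_ncard hsub (Set.finite_Ico 1 i)
    rw [ncard_Ico] at this
    omega

section Seq

variable {a : ℕ → ℕ}

lemma T_finite (ha : ∀ ⦃i j : ℕ⦄, 1 ≤ i → i ≤ j → a j ≤ a i)
    (hz : ∃ N, 1 ≤ N ∧ a N = 0) {j : ℕ} (hj : 1 ≤ j) :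
    {i : ℕ | 1 ≤ i ∧ j ≤ a i}.Finite := by
  obtain ⟨N, hN1, hN0⟩ := hz
  refine (Set.finite_Ico 1 N).subset ?_
  rintro i ⟨hi1, hia⟩
  refine ⟨hi1, ?_⟩
  by_contra h
  have := ha hN1 (show N ≤ i by omega)
  omega

lemma S_finite (ha : ∀ ⦃i j : ℕ⦄, 1 ≤ i → i ≤ j → a j ≤ a i) (u : ℤ) :
    {i : ℕ | 1 ≤ i ∧ u ≤ (a i : ℤ) - (i : ℤ)}.Finite := by
  refine (Set.finite_Icc 1 ((a 1 : ℤ) - u).toNat).subset ?_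
  rintro i ⟨hi1, hiu⟩
  have := ha le_rfl hi1
  exact ⟨hi1, by omega⟩

/-- Galois-type membership: `j ≤ a i ↔ i ≤ #{i' ≥ 1 : j ≤ a i'}` for `i, j ≥ 1`. -/
lemma galois_T (ha : ∀ ⦃i j : ℕ⦄, 1 ≤ i → i ≤ j → a j ≤ a i)
    (hz : ∃ N, 1 ≤ N ∧ a N = 0) {i j : ℕ} (hi : 1 ≤ i) (hj : 1 ≤ j) :
    j ≤ a i ↔ i ≤ {i' : ℕ | 1 ≤ i' ∧ j ≤ a i'}.ncard := by
  rw [show (j ≤ a i) ↔ i ∈ {i' : ℕ | 1 ≤ i' ∧ j ≤ a i'} by simp [hi]]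
  exact mem_iff_le_ncard (T_finite ha hz hj) (fun _ h => h.1)
    (fun k hk i' hi'1 hi'k => ⟨hi'1, le_trans hk.2 (ha hi'1 hi'k)⟩) hi

lemma galois_S (ha : ∀ ⦃i j : ℕ⦄, 1 ≤ i → i ≤ j → a j ≤ a i)
    {u : ℤ} {i : ℕ} (hi : 1 ≤ i) :
    u ≤ (a i : ℤ) - (i : ℤ) ↔ i ≤ {i' : ℕ | 1 ≤ i' ∧ u ≤ (a i' : ℤ) - (i' : ℤ)}.ncard := by
  rw [show (u ≤ (a i : ℤ) - (i : ℤ)) ↔ i ∈ {i' : ℕ | 1 ≤ i' ∧ u ≤ (a i' : ℤ) - (i' : ℤ)}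
    by simp [hi]]
  refine mem_iff_le_ncard (S_finite ha u) (fun _ h => h.1) ?_ hi
  rintro k ⟨hk1, hku⟩ i' hi'1 hi'k
  have := ha hi'1 hi'k
  exact ⟨hi'1, by omega⟩

/-- Core lemma: `u ∉ mayaOf a` iff the conjugate-count sequence hits the reflected value. -/
lemma not_mem_maya_iff (ha : ∀ ⦃i j : ℕ⦄, 1 ≤ i → i ≤ j → a j ≤ a i)
    (hz : ∃ N, 1 ≤ N ∧ a N = 0) (u : ℤ) :
    u ∉ mayaOf a ↔ ∃ j : ℕ, 1 ≤ j ∧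
      (({i : ℕ | 1 ≤ i ∧ j ≤ a i}.ncard : ℤ)) = (j : ℤ) - u - 1 := by
  constructor
  · intro hu
    set s : ℕ := {i' : ℕ | 1 ≤ i' ∧ u ≤ (a i' : ℤ) - (i' : ℤ)}.ncard with hs
    -- s + u ≥ 0
    have hsu : 0 ≤ (s : ℤ) + u := by
      rcases le_or_gt 0 u with h | h
      · positivity
      · have h1 : 1 ≤ (-u).toNat := by omega
        have hmem : u ≤ (a (-u).toNat : ℤ) - (((-u).toNat : ℕ) : ℤ) := by
          have := Nat.zero_le (a (-u).toNat)
          omega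
        have := (galois_S ha h1).mp hmem
        omega
    refine ⟨((s : ℤ) + u).toNat + 1, by omega, ?_⟩
    set j : ℕ := ((s : ℤ) + u).toNat + 1 with hjdef
    have hjz : (j : ℤ) = (s : ℤ) + u + 1 := by omega
    have hj1 : 1 ≤ j := by omega
    -- c j = s
    have h1 : s ≤ {i : ℕ | 1 ≤ i ∧ j ≤ a i}.ncard := by
      rcases Nat.eq_zero_or_pos s with h0 | hs1
      · omega
      · rw [← galois_T ha hz hs1 hj1]
        have has : u ≤ (a s : ℤ) - (s : ℤ) := (galois_S ha hs1).mpr le_rfl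
        -- a s ≥ j, since a s = j - 1 would put u in the maya diagram
        by_contra h
        have : (a s : ℤ) - (s : ℤ) = u := by omega
        exact hu ⟨s, hs1, this.symm⟩
    have h2 : {i : ℕ | 1 ≤ i ∧ j ≤ a i}.ncard ≤ s := by
      by_contra h
      have hja : j ≤ a (s + 1) := (galois_T ha hz (by omega) hj1).mpr (by omega)
      have hmem : u ≤ (a (s + 1) : ℤ) - ((s + 1 : ℕ) : ℤ) := by push_cast; omega
      have := (galois_S ha (show 1 ≤ s + 1 by omega)).mp hmem
      omega
    omega
  · rintro ⟨j, hj1, hcj⟩ ⟨i, hi1, hui⟩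
    set s' : ℕ := {i : ℕ | 1 ≤ i ∧ j ≤ a i}.ncard with hs'
    rcases le_or_gt i s' with h | h
    · have : j ≤ a i := (galois_T ha hz hi1 hj1).mpr h
      omega
    · have h2 : ¬ j ≤ a (s' + 1) := fun hc =>
        by have := (galois_T ha hz (show 1 ≤ s' + 1 by omega) hj1).mp hc; omega
      have := ha (show 1 ≤ s' + 1 by omega) (show s' + 1 ≤ i by omega)
      omega

/-- The maximum of the Maya diagram is `a 1 - 1`. -/
lemma isGreatest_maya (ha : ∀ ⦃i j : ℕ⦄, 1 ≤ i → i ≤ j → a j ≤ a i) :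
    IsGreatest (mayaOf a) ((a 1 : ℤ) - 1) := by
  constructor
  · exact ⟨1, le_rfl, by push_cast; ring⟩
  · rintro t ⟨i, hi1, rfl⟩
    have := ha le_rfl hi1
    omega

lemma mayaOf_shift (ha : ∀ ⦃i j : ℕ⦄, 1 ≤ i → i ≤ j → a j ≤ a i) :
    mayaOf (fun i => a (i + 1)) = (fun t => t + 1) '' (mayaOf a \ {(a 1 : ℤ) - 1}) := by
  ext t
  constructor
  · rintro ⟨i, hi1, rfl⟩
    refine ⟨(a (i + 1) : ℤ) - (i + 1 : ℕ), ⟨⟨i + 1, by omega, rfl⟩, ?_⟩, by push_cast; ring⟩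
    have := ha le_rfl (show 1 ≤ i + 1 by omega)
    simp only [Set.mem_singleton_iff]
    push_cast
    omega
  · rintro ⟨u, ⟨⟨i, hi1, rfl⟩, hne⟩, rfl⟩
    simp only [Set.mem_singleton_iff] at hne
    have hi2 : 2 ≤ i := by
      by_contra h
      have : i = 1 := by omega
      subst this
      simp at hne
    refine ⟨i - 1, by omega, ?_⟩
    show (a i : ℤ) - (i : ℤ) + 1 = (a (i - 1 + 1) : ℤ) - ((i - 1 : ℕ) : ℤ)
    have h3 : i - 1 + 1 = i := by omega
    rw [h3]
    omega

end Seq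

/-- The first part is determined by the Maya diagram. -/
lemma maya_one {a b : ℕ → ℕ}
    (ha : ∀ ⦃i j : ℕ⦄, 1 ≤ i → i ≤ j → a j ≤ a i)
    (hb : ∀ ⦃i j : ℕ⦄, 1 ≤ i → i ≤ j → b j ≤ b i)
    (hab : mayaOf a = mayaOf b) : a 1 = b 1 := by
  have h1 : IsGreatest (mayaOf b) ((a 1 : ℤ) - 1) := hab ▸ isGreatest_maya ha
  have := h1.unique (isGreatest_maya hb)
  omega

/-- The Maya diagram determines the sequence (on indices `≥ 1`). -/
lemma maya_inj (n : ℕ) : ∀ (a b : ℕ → ℕ),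
    (∀ ⦃i j : ℕ⦄, 1 ≤ i → i ≤ j → a j ≤ a i) → (∃ N, 1 ≤ N ∧ a N = 0) →
    (∀ ⦃i j : ℕ⦄, 1 ≤ i → i ≤ j → b j ≤ b i) → (∃ N, 1 ≤ N ∧ b N = 0) →
    mayaOf a = mayaOf b → a (n + 1) = b (n + 1) := by
  induction n with
  | zero => intro a b ha _ hb _ hab; exact maya_one ha hb hab
  | succ n ih =>
    intro a b ha hza hb hzb hab
    have h11 : a 1 = b 1 := maya_one ha hb hab
    have hshift : mayaOf (fun i => a (i + 1)) = mayaOf (fun i => b (i + 1)) := by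
      rw [mayaOf_shift ha, mayaOf_shift hb, hab, h11]
    exact ih (fun i => a (i + 1)) (fun i => b (i + 1))
      (fun i j hi hij => ha (by omega) (by omega))
      (by obtain ⟨N, hN1, hN0⟩ := hza
          exact ⟨N, hN1, le_antisymm (le_trans (ha hN1 (by omega)) (by omega)) (by omega)⟩)
      (fun i j hi hij => hb (by omega) (by omega))
      (by obtain ⟨N, hN1, hN0⟩ := hzb
          exact ⟨N, hN1, le_antisymm (le_trans (hb hN1 (by omega)) (by omega)) (by omega)⟩)
      hshift


open MayaPartition

lemma part_anti (mu : MayaPartition) : ∀ ⦃i j : ℕ⦄, 1 ≤ i → i ≤ j → mu.part j ≤ mu.part i :=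
  fun _ _ _ h => mu.antitone h

lemma part_zero (mu : MayaPartition) : ∃ N, 1 ≤ N ∧ mu.part N = 0 := by
  obtain ⟨N, hN⟩ := mu.exists_zero
  refine ⟨N + 1, by omega, ?_⟩
  have h2 : mu.part (N + 1) ≤ mu.part N := mu.antitone (by omega)
  omega

lemma mayaZ_eq (mu : MayaPartition) : mu.mayaZ = mayaOf mu.part := rfl

lemma count_maya (mu : MayaPartition) :
    mayaOf (fun j => {i : ℕ | 1 ≤ i ∧ j ≤ mu.part i}.ncard) = {t : ℤ | -t - 1 ∉ mu.mayaZ} := by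
  ext t
  simp only [Set.mem_setOf_eq, mayaZ_eq]
  rw [not_mem_maya_iff (part_anti mu) (part_zero mu) (-t - 1)]
  simp only [mayaOf, Set.mem_setOf_eq]
  constructor
  · rintro ⟨j, hj, ht⟩; exact ⟨j, hj, by omega⟩
  · rintro ⟨j, hj, ht⟩; exact ⟨j, hj, by omega⟩

lemma count_anti (mu : MayaPartition) : ∀ ⦃i j : ℕ⦄, 1 ≤ i → i ≤ j →
    {k : ℕ | 1 ≤ k ∧ j ≤ mu.part k}.ncard ≤ {k : ℕ | 1 ≤ k ∧ i ≤ mu.part k}.ncard := by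
  intro i j hi hij
  exact Set.ncard_le_ncard (fun k hk => ⟨hk.1, le_trans hij hk.2⟩)
    (T_finite (part_anti mu) (part_zero mu) hi)

lemma count_zero (mu : MayaPartition) :
    ∃ N, 1 ≤ N ∧ {k : ℕ | 1 ≤ k ∧ N ≤ mu.part k}.ncard = 0 := by
  refine ⟨mu.part 1 + 1, by omega, ?_⟩
  convert Set.ncard_empty ℕ
  ext k
  simp only [Set.mem_setOf_eq, Set.mem_empty_iff_false, iff_false, not_and]
  intro hk1
  have := mu.antitone hk1
  omega

lemma isConj_of_maya {mu nu : MayaPartition} (h : nu.mayaZ = {t : ℤ | -t - 1 ∉ mu.mayaZ}) :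
    mu.IsConj nu := by
  intro j hj
  have key : mayaOf nu.part = mayaOf (fun j => {i : ℕ | 1 ≤ i ∧ j ≤ mu.part i}.ncard) := by
    rw [← mayaZ_eq, h, count_maya]
  have h2 := maya_inj (j - 1) nu.part (fun j => {i : ℕ | 1 ≤ i ∧ j ≤ mu.part i}.ncard)
    (part_anti nu) (part_zero nu) (count_anti mu) (count_zero mu) key
  rw [Nat.sub_add_cancel hj] at h2
  exact h2

lemma conj_maya {eta etaconj : MayaPartition} (h : eta.IsConj etaconj) :
    etaconj.mayaZ = {t : ℤ | -t - 1 ∉ eta.mayaZ} := by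
  have h' : ∀ j : ℕ, 1 ≤ j → etaconj.part j = {i : ℕ | 1 ≤ i ∧ j ≤ eta.part i}.ncard := h
  rw [mayaZ_eq, mayaOf_congr h', count_maya]

lemma isLeast_minPos {S : Set ℤ} (h : {t | t ∈ S ∧ 0 ≤ t}.Nonempty) :
    IsLeast {t | t ∈ S ∧ 0 ≤ t} (minPos S) :=
  ⟨Int.csInf_mem h ⟨0, fun _ ht => ht.2⟩, fun _ ht => csInf_le ⟨0, fun _ hu => hu.2⟩ ht⟩

lemma isGreatest_maxNeg {S : Set ℤ} (h : {t | t ∉ S ∧ t < 0}.Nonempty) :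
    IsGreatest {t | t ∉ S ∧ t < 0} (maxNeg S) :=
  ⟨Int.csSup_mem h ⟨0, fun _ ht => le_of_lt ht.2⟩,
   fun _ ht => le_csSup ⟨0, fun _ hu => le_of_lt hu.2⟩ ht⟩

lemma minPos_reflect {S S' : Set ℤ} (h : S' = {t : ℤ | -t - 1 ∉ S})
    (hne : {t | t ∉ S ∧ t < 0}.Nonempty) :
    minPos S' = -(maxNeg S) - 1 := by
  have hg : IsGreatest {t | t ∉ S ∧ t < 0} (maxNeg S) := isGreatest_maxNeg hne
  have hL : IsLeast {t | t ∈ S' ∧ 0 ≤ t} (-(maxNeg S) - 1) := by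
    constructor
    · refine ⟨?_, by have := hg.1.2; omega⟩
      rw [h]
      simp only [Set.mem_setOf_eq]
      rw [show -(-(maxNeg S) - 1) - 1 = maxNeg S by ring]
      exact hg.1.1
    · rintro t ⟨htS, ht0⟩
      rw [h] at htS
      have := hg.2 ⟨htS, by omega⟩
      omega
  exact hL.csInf_eq

lemma maxNeg_reflect {S S' : Set ℤ} (h : S' = {t : ℤ | -t - 1 ∉ S})
    (hne : {t | t ∈ S ∧ 0 ≤ t}.Nonempty) :
    maxNeg S' = -(minPos S) - 1 := by
  have hl : IsLeast {t | t ∈ S ∧ 0 ≤ t} (minPos S) := isLeast_minPos hne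
  have hG : IsGreatest {t | t ∉ S' ∧ t < 0} (-(minPos S) - 1) := by
    constructor
    · refine ⟨?_, by have := hl.1.2; omega⟩
      rw [h]
      simp only [Set.mem_setOf_eq, not_not]
      rw [show -(-(minPos S) - 1) - 1 = minPos S by ring]
      exact hl.1.1
    · rintro t ⟨htS, ht0⟩
      rw [h] at htS
      simp only [Set.mem_setOf_eq, not_not] at htS
      have := hl.2 ⟨htS, by omega⟩
      omega
  exact hG.csSup_eq

end ConjAux
/-- Conjugation intertwines the Maya-diagram operations:
`(η^c)′ = (η′)^r`, `(η^r)′ = (η′)^c`, `(η^{rc})′ = (η′)^{rc}`. -/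
theorem conj_intertwines (η ηconj ηr ηc ηrc ηconjr ηconjc ηconjrc : MayaPartition)
    (hne : η.part 1 ≠ 0) (hconj : η.IsConj ηconj)
    (hr : η.IsR ηr) (hc : η.IsC ηc) (hrc : η.IsRC ηrc)
    (hr' : ηconj.IsR ηconjr) (hc' : ηconj.IsC ηconjc) (hrc' : ηconj.IsRC ηconjrc) :
    ηc.IsConj ηconjr ∧ ηr.IsConj ηconjc ∧ ηrc.IsConj ηconjrc := by
  -- equation forms of the hypotheses
  have hr2 : ηr.mayaZ = (fun t => t + 1) '' (η.mayaZ \ {MayaPartition.minPos η.mayaZ}) := hr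
  have hc2 : ηc.mayaZ = (fun t => t - 1) '' (η.mayaZ ∪ {MayaPartition.maxNeg η.mayaZ}) := hc
  have hrc2 : ηrc.mayaZ = (η.mayaZ \ {MayaPartition.minPos η.mayaZ}) ∪ {MayaPartition.maxNeg η.mayaZ} := hrc
  have hr2' : ηconjr.mayaZ =
      (fun t => t + 1) '' (ηconj.mayaZ \ {MayaPartition.minPos ηconj.mayaZ}) := hr'
  have hc2' : ηconjc.mayaZ =
      (fun t => t - 1) '' (ηconj.mayaZ ∪ {MayaPartition.maxNeg ηconj.mayaZ}) := hc'
  have hrc2' : ηconjrc.mayaZ =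
      (ηconj.mayaZ \ {MayaPartition.minPos ηconj.mayaZ}) ∪ {MayaPartition.maxNeg ηconj.mayaZ} := hrc'
  have hS' : ηconj.mayaZ = {t : ℤ | -t - 1 ∉ η.mayaZ} := ConjAux.conj_maya hconj
  have hpos : {t | t ∈ η.mayaZ ∧ 0 ≤ t}.Nonempty :=
    ⟨(η.part 1 : ℤ) - 1, ⟨1, le_rfl, by norm_num⟩, by omega⟩
  have hneg : {t | t ∉ η.mayaZ ∧ t < 0}.Nonempty := by
    have hconj1 : 1 ≤ ηconj.part 1 := by
      have h1 : ηconj.part 1 = {i : ℕ | 1 ≤ i ∧ 1 ≤ η.part i}.ncard := hconj 1 le_rfl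
      have hfin := ConjAux.T_finite (ConjAux.part_anti η) (ConjAux.part_zero η) (le_refl 1)
      have hnn : ({i : ℕ | 1 ≤ i ∧ 1 ≤ η.part i}).Nonempty := ⟨1, le_rfl, by omega⟩
      have := (Set.ncard_pos hfin).mpr hnn
      omega
    refine ⟨-((ηconj.part 1 : ℤ) - 1) - 1, ?_, by omega⟩
    have hmem : ((ηconj.part 1 : ℤ) - 1) ∈ ηconj.mayaZ := ⟨1, le_rfl, by norm_num⟩
    rw [hS'] at hmem
    exact hmem
  have hq : MayaPartition.minPos ηconj.mayaZ = -(MayaPartition.maxNeg η.mayaZ) - 1 :=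
    ConjAux.minPos_reflect hS' hneg
  have hn : MayaPartition.maxNeg ηconj.mayaZ = -(MayaPartition.minPos η.mayaZ) - 1 :=
    ConjAux.maxNeg_reflect hS' hpos
  have hp0 : 0 ≤ MayaPartition.minPos η.mayaZ := (ConjAux.isLeast_minPos hpos).1.2
  have hm0 : MayaPartition.maxNeg η.mayaZ < 0 := (ConjAux.isGreatest_maxNeg hneg).1.2
  set S := η.mayaZ with hSdef
  set p := MayaPartition.minPos S with hpdef
  set m := MayaPartition.maxNeg S with hmdef
  refine ⟨ConjAux.isConj_of_maya ?_, ConjAux.isConj_of_maya ?_, ConjAux.isConj_of_maya ?_⟩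
  · -- (η^c)′ = (η′)^r
    rw [hr2', hq, hS', hc2]
    ext t
    simp only [Set.mem_image, Set.mem_diff, Set.mem_union, Set.mem_setOf_eq,
      Set.mem_singleton_iff]
    constructor
    · rintro ⟨u, ⟨hu, hune⟩, rfl⟩
      rintro ⟨v, hv, hveq⟩
      have hvu : v = -u - 1 := by omega
      subst hvu
      rcases hv with hv | hv
      · exact hu hv
      · exact hune (by omega)
    · intro hnot
      refine ⟨t - 1, ⟨?_, ?_⟩, by ring⟩
      · intro hmem
        exact hnot ⟨-(t - 1) - 1, Or.inl hmem, by ring⟩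
      · intro ht
        exact hnot ⟨m, Or.inr rfl, by omega⟩
  · -- (η^r)′ = (η′)^c
    rw [hc2', hn, hS', hr2]
    ext t
    simp only [Set.mem_image, Set.mem_diff, Set.mem_union, Set.mem_setOf_eq,
      Set.mem_singleton_iff]
    constructor
    · rintro ⟨u, h1, rfl⟩
      rintro ⟨v, ⟨hvS, hvp⟩, hveq⟩
      have hvu : v = -u - 1 := by omega
      subst hvu
      rcases h1 with h1 | h1
      · exact h1 hvS
      · exact hvp (by omega)
    · intro hnot
      refine ⟨t + 1, ?_, by ring⟩
      rw [show (-(t + 1) - 1 : ℤ) = -t - 2 by ring]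
      by_cases hS1 : (-t - 2 : ℤ) ∈ S
      · by_cases hp1 : (-t - 2 : ℤ) = p
        · right; omega
        · exact absurd ⟨-t - 2, ⟨hS1, hp1⟩, by ring⟩ hnot
      · exact Or.inl hS1
  · -- (η^{rc})′ = (η′)^{rc}
    rw [hrc2', hq, hn, hS', hrc2]
    ext t
    simp only [Set.mem_union, Set.mem_diff, Set.mem_setOf_eq, Set.mem_singleton_iff]
    constructor
    · rintro (⟨h1, h2⟩ | h1)
      · rintro (⟨hv, _⟩ | hv)
        · exact h1 hv
        · exact h2 (by omega)
      · rintro (⟨hv, hvp⟩ | hv)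
        · exact hvp (by omega)
        · omega
    · intro hnot
      by_cases hS1 : (-t - 1 : ℤ) ∈ S
      · by_cases heq : (-t - 1 : ℤ) = p
        · right; omega
        · exact absurd (Or.inl ⟨hS1, heq⟩) hnot
      · refine Or.inl ⟨hS1, ?_⟩
        intro hh
        exact hnot (Or.inr (by omega))
end

section
/- For any nonempty partition η: (i) {i ∈ ℤ_{>0} : η^r_i > i + 1} = {i ∈ ℤ_{>0} : i ≤ d(η) − 1}; (ii) {i ∈ ℤ_{>0} : η^c_i ≥ i − 1} = {i ∈ ℤ_{>0} : i ≤ d(η)}. -/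
/-- A partition `η`, given by its parts `η.part i` for `i ≥ 1` (indexed from 1;
by convention `part 0 = part 1`), weakly decreasing and eventually zero. -/
structure MPartition where
  part : ℕ → ℕ
  antitone : ∀ ⦃i j : ℕ⦄, i ≤ j → part j ≤ part i
  exists_zero : ∃ N, part N = 0
  head : part 0 = part 1

namespace MPartition

/-- The Maya diagram of `η` in the ℤ-model: an integer `t` represents the
half-integer `t + 1/2`, so `mayaZ η` encodes `S(η) = {η_i − i + 1/2 | i ≥ 1}`. -/
def mayaZ (η : MPartition) : Set ℤ := {t | ∃ i : ℕ, 1 ≤ i ∧ t = (η.part i : ℤ) - (i : ℤ)}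

/-- `ℓ(η)`: the number of nonzero parts. -/
noncomputable def len (η : MPartition) : ℕ := sSup {i | η.part i ≠ 0}

/-- `d(η) = max {i : η_i ≥ i}` (Durfee square size), `0` for the empty partition. -/
noncomputable def durfee (η : MPartition) : ℕ := sSup {i | i ≤ η.part i}

/-- `d̃(η) = max {i : η_i ≥ d(η)}`. -/
noncomputable def dtil (η : MPartition) : ℕ := sSup {i | η.durfee ≤ η.part i}

/-- `min S⁺`: the least element of `S` representing a positive half-integer. -/
noncomputable def minPos (S : Set ℤ) : ℤ := sInf {t | t ∈ S ∧ 0 ≤ t}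

/-- `max S⁻`: the greatest element not in `S` representing a negative half-integer. -/
noncomputable def maxNeg (S : Set ℤ) : ℤ := sSup {t | t ∉ S ∧ t < 0}

/-- `ηr = η^r`: defined by `S(η^r) = {t+1 | t ∈ S(η) \ {min S(η)⁺}}`. -/
def IsR (η ηr : MPartition) : Prop :=
  mayaZ ηr = (fun t => t + 1) '' (mayaZ η \ {minPos (mayaZ η)})

/-- `ηc = η^c`: defined by `S(η^c) = {t−1 | t ∈ S(η) ∪ {max S(η)⁻}}`. -/
def IsC (η ηc : MPartition) : Prop :=
  mayaZ ηc = (fun t => t - 1) '' (mayaZ η ∪ {maxNeg (mayaZ η)})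

/-- `ηrc = η^{rc}`: defined by `S(η^{rc}) = (S(η) \ {min S(η)⁺}) ∪ {max S(η)⁻}`. -/
def IsRC (η ηrc : MPartition) : Prop :=
  mayaZ ηrc = (mayaZ η \ {minPos (mayaZ η)}) ∪ {maxNeg (mayaZ η)}

/-- `ηc = η′` is the conjugate partition: `η′_j = |{i ≥ 1 : η_i ≥ j}|`. -/
def IsConj (η ηc : MPartition) : Prop :=
  ∀ j : ℕ, 1 ≤ j → ηc.part j = Set.ncard {i : ℕ | 1 ≤ i ∧ j ≤ η.part i}

/-- `|η|`: the sum of the parts. -/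
noncomputable def size (η : MPartition) : ℕ := ∑ i ∈ Finset.Icc 1 η.len, η.part i

end MPartition

open MPartition

private lemma nat_eq_of_iff {a b : ℕ} (h : ∀ i : ℕ, 1 ≤ i → (i ≤ a ↔ i ≤ b)) : a = b := by
  rcases Nat.eq_zero_or_pos a with ha | ha
  · rcases Nat.eq_zero_or_pos b with hb | hb
    · omega
    · have := (h b hb).mpr le_rfl; omega
  · rcases Nat.eq_zero_or_pos b with hb | hb
    · have := (h a ha).mp le_rfl; omega
    · have h1 := (h a ha).mp le_rfl
      have h2 := (h b hb).mpr le_rfl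
      omega

lemma f_strictAnti (μ : MPartition) : StrictAnti (fun j : ℕ => (μ.part j : ℤ) - j) := by
  apply strictAnti_nat_of_succ_lt
  intro n
  have : μ.part (n+1) ≤ μ.part n := μ.antitone (Nat.le_succ n)
  push_cast
  omega

lemma maya_count (μ : MPartition) (k : ℤ) :
    {t | t ∈ μ.mayaZ ∧ k ≤ t}.Finite ∧
    ∀ i : ℕ, 1 ≤ i → (k ≤ (μ.part i : ℤ) - i ↔ i ≤ {t | t ∈ μ.mayaZ ∧ k ≤ t}.ncard) := by
  set f : ℕ → ℤ := fun j : ℕ => (μ.part j : ℤ) - j with hf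
  set A : Set ℕ := {j : ℕ | 1 ≤ j ∧ k ≤ f j} with hA
  obtain ⟨N, hN⟩ := μ.exists_zero
  have hbd : A ⊆ Set.Iic (N + k.natAbs) := by
    intro j hj
    obtain ⟨hj1, hjk⟩ := hj
    simp only [Set.mem_Iic]
    by_cases hjN : j ≤ N
    · omega
    · have h0 : μ.part j = 0 := Nat.le_antisymm (hN ▸ μ.antitone (by omega)) (Nat.zero_le _)
      simp only [hf, h0] at hjk
      push_cast at hjk
      omega
  have hAfin : A.Finite := (Set.finite_Iic _).subset hbd
  have hinj : Function.Injective f := (f_strictAnti μ).injective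
  set m : ℕ := sSup A with hm
  have hA_eq : A = Set.Icc 1 m := by
    rcases A.eq_empty_or_nonempty with he | hne
    · rw [he, hm, he]
      rw [csSup_empty]
      simp
    · have hmem : m ∈ A := Nat.sSup_mem hne hAfin.bddAbove
      ext j
      constructor
      · intro hj
        exact ⟨hj.1, le_csSup hAfin.bddAbove hj⟩
      · rintro ⟨hj1, hjm⟩
        refine ⟨hj1, le_trans hmem.2 ?_⟩
        exact (f_strictAnti μ).antitone hjm
  have hset : {t | t ∈ μ.mayaZ ∧ k ≤ t} = f '' A := by
    ext t
    simp only [Set.mem_setOf_eq, Set.mem_image, mayaZ, hA, hf]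
    constructor
    · rintro ⟨⟨j, hj1, rfl⟩, hk⟩
      exact ⟨j, ⟨hj1, hk⟩, rfl⟩
    · rintro ⟨j, ⟨hj1, hjk⟩, rfl⟩
      exact ⟨⟨j, hj1, rfl⟩, hjk⟩
  have hcard : {t | t ∈ μ.mayaZ ∧ k ≤ t}.ncard = m := by
    rw [hset, Set.ncard_image_of_injective _ hinj, hA_eq, ← Finset.coe_Icc,
      Set.ncard_coe_finset, Nat.card_Icc]
    omega
  refine ⟨hset ▸ hAfin.image f, fun i hi1 => ?_⟩
  rw [hcard]
  constructor
  · intro hk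
    exact le_csSup hAfin.bddAbove ⟨hi1, hk⟩
  · intro him
    have : i ∈ A := hA_eq ▸ Set.mem_Icc.mpr ⟨hi1, him⟩
    exact this.2

lemma durfee_spec (η : MPartition) (hne : η.part 1 ≠ 0) :
    1 ≤ η.durfee ∧ ∀ i : ℕ, 1 ≤ i → (i ≤ η.durfee ↔ i ≤ η.part i) := by
  obtain ⟨N, hN⟩ := η.exists_zero
  have hbdd : ∀ i ∈ {i | i ≤ η.part i}, i ≤ N := by
    intro i hi
    simp only [Set.mem_setOf_eq] at hi
    by_contra h
    have := hN ▸ η.antitone (le_of_lt (not_le.mp h))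
    omega
  have hB : BddAbove {i | i ≤ η.part i} := ⟨N, hbdd⟩
  have h1 : 1 ∈ {i | i ≤ η.part i} := by
    simp only [Set.mem_setOf_eq]; omega
  have hd : η.durfee ∈ {i | i ≤ η.part i} := Nat.sSup_mem ⟨1, h1⟩ hB
  have hd1 : 1 ≤ η.durfee := le_csSup hB h1
  refine ⟨hd1, fun i hi1 => ⟨fun h => ?_, fun h => le_csSup hB h⟩⟩
  have h2 : η.part η.durfee ≤ η.part i := η.antitone h
  simp only [Set.mem_setOf_eq] at hd
  omega

lemma len_spec (η : MPartition) (hne : η.part 1 ≠ 0) :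
    1 ≤ η.len ∧ ∀ i : ℕ, η.len < i → η.part i = 0 := by
  obtain ⟨N, hN⟩ := η.exists_zero
  have hbdd : ∀ i ∈ {i | η.part i ≠ 0}, i ≤ N := by
    intro i hi
    simp only [Set.mem_setOf_eq] at hi
    by_contra h
    have := hN ▸ η.antitone (le_of_lt (not_le.mp h))
    omega
  have hB : BddAbove {i | η.part i ≠ 0} := ⟨N, hbdd⟩
  have h1 : 1 ∈ {i | η.part i ≠ 0} := hne
  refine ⟨le_csSup hB h1, fun i hil => ?_⟩
  by_contra h
  have : i ≤ η.len := le_csSup hB h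
  omega

/-- `{i > 0 : η^r_i > i+1} = {i > 0 : i ≤ d(η)−1}` and
`{i > 0 : η^c_i ≥ i−1} = {i > 0 : i ≤ d(η)}`. -/
theorem value_sets_r_c (η ηr ηc : MPartition) (hne : η.part 1 ≠ 0)
    (hr : η.IsR ηr) (hc : η.IsC ηc) (i : ℕ) (hi : 1 ≤ i) :
    (i + 1 < ηr.part i ↔ i ≤ η.durfee - 1) ∧
    (i - 1 ≤ ηc.part i ↔ i ≤ η.durfee) := by
  obtain ⟨hd1, hdiff⟩ := durfee_spec η hne
  obtain ⟨hl1, hlz⟩ := len_spec η hne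
  have hη1 : 1 ≤ η.part 1 := Nat.one_le_iff_ne_zero.mpr hne
  -- ncard of nonnegative part = durfee
  have hN0 : {t | t ∈ η.mayaZ ∧ (0:ℤ) ≤ t}.ncard = η.durfee := by
    symm; apply nat_eq_of_iff
    intro j hj
    rw [hdiff j hj, ← (maya_count η 0).2 j hj]
    omega
  have F0 : {t | t ∈ η.mayaZ ∧ (0:ℤ) ≤ t}.Finite := (maya_count η 0).1
  -- minPos facts
  have hnonempty : {t | t ∈ η.mayaZ ∧ (0:ℤ) ≤ t}.Nonempty := by
    refine ⟨(η.part 1 : ℤ) - 1, ⟨1, le_rfl, by norm_num⟩, by omega⟩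
  have hbb : BddBelow {t | t ∈ η.mayaZ ∧ (0:ℤ) ≤ t} := ⟨0, fun t ht => ht.2⟩
  have hp_mem : minPos η.mayaZ ∈ {t | t ∈ η.mayaZ ∧ (0:ℤ) ≤ t} := Int.csInf_mem hnonempty hbb
  have hp_le : ∀ t ∈ {t | t ∈ η.mayaZ ∧ (0:ℤ) ≤ t}, minPos η.mayaZ ≤ t :=
    fun t ht => csInf_le hbb ht
  constructor
  · -- part (i)
    have hr' : ηr.mayaZ = (fun t => t + 1) '' (η.mayaZ \ {minPos η.mayaZ}) := hr
    have hi1 : {t | t ∈ ηr.mayaZ ∧ (2:ℤ) ≤ t}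
        = (fun t => t + 1) '' ({t | t ∈ η.mayaZ ∧ (0:ℤ) ≤ t} \ {minPos η.mayaZ}) := by
      rw [hr']
      ext t
      simp only [Set.mem_setOf_eq, Set.mem_image, Set.mem_diff, Set.mem_singleton_iff]
      constructor
      · rintro ⟨⟨x, ⟨hxS, hxp⟩, rfl⟩, h2⟩
        exact ⟨x, ⟨⟨hxS, by omega⟩, hxp⟩, rfl⟩
      · rintro ⟨x, ⟨⟨hxS, hx0⟩, hxp⟩, rfl⟩
        have hple : minPos η.mayaZ ≤ x := hp_le x ⟨hxS, hx0⟩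
        have hp0 : (0:ℤ) ≤ minPos η.mayaZ := hp_mem.2
        exact ⟨⟨x, ⟨hxS, hxp⟩, rfl⟩, by omega⟩
    have hcard2 : {t | t ∈ ηr.mayaZ ∧ (2:ℤ) ≤ t}.ncard = η.durfee - 1 := by
      rw [hi1, Set.ncard_image_of_injective _ (add_left_injective (1:ℤ)),
        Set.ncard_diff_singleton_of_mem hp_mem, hN0]
    have h := (maya_count ηr 2).2 i hi
    rw [hcard2] at h
    constructor
    · intro hlt
      exact h.mp (by omega)
    · intro hle
      have := h.mpr hle
      omega
  · -- part (ii)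
    have hc' : ηc.mayaZ = (fun t => t - 1) '' (η.mayaZ ∪ {maxNeg η.mayaZ}) := hc
    -- maxNeg is negative
    have hNL : {t | t ∈ η.mayaZ ∧ -(η.len:ℤ) ≤ t}.ncard = η.len := by
      symm; apply nat_eq_of_iff
      intro j hj
      rw [← (maya_count η (-(η.len:ℤ))).2 j hj]
      constructor
      · intro hjl
        have : (0:ℤ) ≤ (η.part j : ℤ) := by positivity
        omega
      · intro hk
        by_contra hjl
        have h0 : η.part j = 0 := hlz j (by omega)
        rw [h0] at hk
        simp at hk
        omega
    have hsub : {t | t ∈ η.mayaZ ∧ (0:ℤ) ≤ t} ⊆ {t | t ∈ η.mayaZ ∧ -(η.len:ℤ) ≤ t} := by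
      intro t ht
      exact ⟨ht.1, by have := ht.2; omega⟩
    have hdiffcard :
        ({t | t ∈ η.mayaZ ∧ -(η.len:ℤ) ≤ t} \ {t | t ∈ η.mayaZ ∧ (0:ℤ) ≤ t}).ncard
          = η.len - η.durfee := by
      rw [Set.ncard_diff hsub F0, hNL, hN0]
    have hIco : (Set.Ico (-(η.len:ℤ)) 0).ncard = η.len := by
      rw [← Finset.coe_Ico, Set.ncard_coe_finset, Int.card_Ico]
      omega
    have hdd : η.durfee ≤ η.len := by
      have h2 : η.durfee ≤ η.part η.durfee := (hdiff η.durfee hd1).mp le_rfl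
      by_contra h
      have := hlz η.durfee (by omega)
      omega
    have hlt : ({t | t ∈ η.mayaZ ∧ -(η.len:ℤ) ≤ t} \ {t | t ∈ η.mayaZ ∧ (0:ℤ) ≤ t}).ncard
        < (Set.Ico (-(η.len:ℤ)) 0).ncard := by
      rw [hdiffcard, hIco]; omega
    have hfinD : ({t | t ∈ η.mayaZ ∧ -(η.len:ℤ) ≤ t} \ {t | t ∈ η.mayaZ ∧ (0:ℤ) ≤ t}).Finite :=
      ((maya_count η (-(η.len:ℤ))).1).diff
    obtain ⟨t0, ht0I, ht0D⟩ := Set.exists_mem_notMem_of_ncard_lt_ncard hlt hfinD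
    have ht0S : t0 ∉ η.mayaZ := by
      intro hts
      obtain ⟨ht0l, ht0u⟩ := Set.mem_Ico.mp ht0I
      exact ht0D ⟨⟨hts, ht0l⟩, fun hC => by have := hC.2; omega⟩
    have hTne : {t | t ∉ η.mayaZ ∧ t < 0}.Nonempty :=
      ⟨t0, ht0S, (Set.mem_Ico.mp ht0I).2⟩
    have hTbdd : BddAbove {t | t ∉ η.mayaZ ∧ t < 0} := ⟨0, fun x hx => le_of_lt hx.2⟩
    have hq : maxNeg η.mayaZ < 0 := (Int.csSup_mem hTne hTbdd).2
    have hi2 : {t | t ∈ ηc.mayaZ ∧ (-1:ℤ) ≤ t}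
        = (fun t => t - 1) '' {t | t ∈ η.mayaZ ∧ (0:ℤ) ≤ t} := by
      rw [hc']
      ext t
      simp only [Set.mem_setOf_eq, Set.mem_image, Set.mem_union, Set.mem_singleton_iff]
      constructor
      · rintro ⟨⟨x, hx, rfl⟩, h2⟩
        rcases hx with hxS | hxq
        · exact ⟨x, ⟨hxS, by omega⟩, rfl⟩
        · subst hxq; omega
      · rintro ⟨x, ⟨hxS, hx0⟩, rfl⟩
        exact ⟨⟨x, Or.inl hxS, rfl⟩, by omega⟩
    have hcardc : {t | t ∈ ηc.mayaZ ∧ (-1:ℤ) ≤ t}.ncard = η.durfee := by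
      rw [hi2, Set.ncard_image_of_injective _ sub_left_injective, hN0]
    have h := (maya_count ηc (-1)).2 i hi
    rw [hcardc] at h
    constructor
    · intro hle
      refine h.mp ?_
      have hci : (i:ℤ) - 1 ≤ (ηc.part i : ℤ) := by
        omega
      omega
    · intro hle
      have := h.mpr hle
      omega
end

section
/- For nonempty partitions λ and μ and any partition ν, the combined weight factor satisfies the symmetry q^{K₂(λ,μ,ν)} = conj(q^{K₃(μ′,λ′,ν′)}), where conj denotes the substitution q_k ↦ q_{−k}. -/
/-- A partition `η`, given by its parts `η.part i` for `i ≥ 1` (indexed from 1;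
by convention `part 0 = part 1`), weakly decreasing and eventually zero. -/
structure YPartition where
  part : ℕ → ℕ
  antitone : ∀ ⦃i j : ℕ⦄, i ≤ j → part j ≤ part i
  exists_zero : ∃ N, part N = 0
  head : part 0 = part 1

namespace YPartition

/-- The Maya diagram of `η` in the ℤ-model: an integer `t` represents the
half-integer `t + 1/2`, so `mayaZ η` encodes `S(η) = {η_i − i + 1/2 | i ≥ 1}`. -/
def mayaZ (η : YPartition) : Set ℤ := {t | ∃ i : ℕ, 1 ≤ i ∧ t = (η.part i : ℤ) - (i : ℤ)}

/-- `ℓ(η)`: the number of nonzero parts. -/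
noncomputable def len (η : YPartition) : ℕ := sSup {i | η.part i ≠ 0}

/-- `d(η) = max {i : η_i ≥ i}` (Durfee square size), `0` for the empty partition. -/
noncomputable def durfee (η : YPartition) : ℕ := sSup {i | i ≤ η.part i}

/-- `d̃(η) = max {i : η_i ≥ d(η)}`. -/
noncomputable def dtil (η : YPartition) : ℕ := sSup {i | η.durfee ≤ η.part i}

/-- `min S⁺`: the least element of `S` representing a positive half-integer. -/
noncomputable def minPos (S : Set ℤ) : ℤ := sInf {t | t ∈ S ∧ 0 ≤ t}

/-- `max S⁻`: the greatest element not in `S` representing a negative half-integer. -/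
noncomputable def maxNeg (S : Set ℤ) : ℤ := sSup {t | t ∉ S ∧ t < 0}

/-- `ηr = η^r`: defined by `S(η^r) = {t+1 | t ∈ S(η) \ {min S(η)⁺}}`. -/
def IsR (η ηr : YPartition) : Prop :=
  mayaZ ηr = (fun t => t + 1) '' (mayaZ η \ {minPos (mayaZ η)})

/-- `ηc = η^c`: defined by `S(η^c) = {t−1 | t ∈ S(η) ∪ {max S(η)⁻}}`. -/
def IsC (η ηc : YPartition) : Prop :=
  mayaZ ηc = (fun t => t - 1) '' (mayaZ η ∪ {maxNeg (mayaZ η)})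

/-- `ηrc = η^{rc}`: defined by `S(η^{rc}) = (S(η) \ {min S(η)⁺}) ∪ {max S(η)⁻}`. -/
def IsRC (η ηrc : YPartition) : Prop :=
  mayaZ ηrc = (mayaZ η \ {minPos (mayaZ η)}) ∪ {maxNeg (mayaZ η)}

/-- `ηc = η′` is the conjugate partition: `η′_j = |{i ≥ 1 : η_i ≥ j}|`. -/
def IsConj (η ηc : YPartition) : Prop :=
  ∀ j : ℕ, 1 ≤ j → ηc.part j = Set.ncard {i : ℕ | 1 ≤ i ∧ j ≤ η.part i}

/-- `|η|`: the sum of the parts. -/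
noncomputable def size (η : YPartition) : ℕ := ∑ i ∈ Finset.Icc 1 η.len, η.part i

end YPartition

/-- Exponent function of `q^{K₂(λ,μ,ν)}`, where `lamc` stands for `λ′`:
`q^{K₂} = q_{1−d(λ′)}^{−λ′_{d(λ′)}} · ∏_{i=1}^{d(λ′)−1} q_{−i} ·
∏_{i=1}^{d(λ′)−1} (q_{−i}/q_{−i+1})^{λ′_i} · ∏_{i=1}^{ℓ(μ)} (q_i/q_{i−1})^{μ_i} ·
∏_{i=1}^{ν_{d(ν)}−d(ν)} q_i^{−1}`. -/
noncomputable def K2 (lamc mu nu : YPartition) : ℤ → ℤ := fun k =>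
  (if k = 1 - (lamc.durfee : ℤ) then -(lamc.part lamc.durfee : ℤ) else 0)
  + (∑ i ∈ Finset.Icc 1 (lamc.durfee - 1), if k = -(i : ℤ) then 1 else 0)
  + (∑ i ∈ Finset.Icc 1 (lamc.durfee - 1), (lamc.part i : ℤ) *
      ((if k = -(i : ℤ) then 1 else 0) - (if k = -(i : ℤ) + 1 then 1 else 0)))
  + (∑ i ∈ Finset.Icc 1 mu.len, (mu.part i : ℤ) *
      ((if k = (i : ℤ) then 1 else 0) - (if k = (i : ℤ) - 1 then 1 else 0)))
  + (∑ i ∈ Finset.Icc 1 (nu.part nu.durfee - nu.durfee), if k = (i : ℤ) then -1 else 0)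

/-- Exponent function of `q^{K₃(λ,μ,ν)}`, where `lamc` stands for `λ′`:
`q^{K₃} = q_{d(μ)−1}^{−μ_{d(μ)}} · ∏_{i=1}^{d(μ)−1} q_i ·
∏_{i=1}^{d(μ)−1} (q_i/q_{i−1})^{μ_i} · ∏_{i=1}^{ℓ(λ′)} (q_{−i}/q_{−i+1})^{λ′_i} ·
∏_{i=1}^{d̃(ν)−d(ν)} q_{−i}^{−1}`. -/
noncomputable def K3 (lamc mu nu : YPartition) : ℤ → ℤ := fun k =>
  (if k = (mu.durfee : ℤ) - 1 then -(mu.part mu.durfee : ℤ) else 0)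
  + (∑ i ∈ Finset.Icc 1 (mu.durfee - 1), if k = (i : ℤ) then 1 else 0)
  + (∑ i ∈ Finset.Icc 1 (mu.durfee - 1), (mu.part i : ℤ) *
      ((if k = (i : ℤ) then 1 else 0) - (if k = (i : ℤ) - 1 then 1 else 0)))
  + (∑ i ∈ Finset.Icc 1 lamc.len, (lamc.part i : ℤ) *
      ((if k = -(i : ℤ) then 1 else 0) - (if k = -(i : ℤ) + 1 then 1 else 0)))
  + (∑ i ∈ Finset.Icc 1 (nu.dtil - nu.durfee), if k = -(i : ℤ) then -1 else 0)


section Aux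

lemma ncard_Icc_nat (a b : ℕ) : (Set.Icc a b).ncard = b + 1 - a := by
  rw [← Finset.coe_Icc, Set.ncard_coe_finset, Nat.card_Icc]

namespace YPartition

lemma part_eventually_zero (η : YPartition) : ∃ N, ∀ m, N ≤ m → η.part m = 0 := by
  obtain ⟨N, hN⟩ := η.exists_zero
  exact ⟨N, fun m hm => Nat.le_zero.mp (hN ▸ η.antitone hm)⟩

lemma conj_le_iff {η ηc : YPartition} (h : η.IsConj ηc) {i j : ℕ}
    (hi : 1 ≤ i) (hj : 1 ≤ j) : j ≤ ηc.part i ↔ i ≤ η.part j := by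
  obtain ⟨N, hN⟩ := η.part_eventually_zero
  set S : Set ℕ := {m : ℕ | 1 ≤ m ∧ i ≤ η.part m} with hS
  have hcount : ηc.part i = S.ncard := h i hi
  have hsub : S ⊆ Set.Icc 1 N := by
    rintro m ⟨h1, h2⟩
    refine ⟨h1, ?_⟩
    by_contra hm
    push_neg at hm
    have := hN m hm.le
    omega
  have hfin : S.Finite := (Set.finite_Icc 1 N).subset hsub
  have hdc : ∀ m ∈ S, ∀ m', 1 ≤ m' → m' ≤ m → m' ∈ S := by
    rintro m ⟨h1, h2⟩ m' h1' h2'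
    exact ⟨h1', le_trans h2 (η.antitone h2')⟩
  rw [hcount]
  constructor
  · intro hle
    by_contra hc
    have hnotin : j ∉ S := fun hj' => hc hj'.2
    have hsub2 : S ⊆ Set.Icc 1 (j - 1) := by
      rintro m hm
      refine ⟨hm.1, ?_⟩
      by_contra hmj
      push_neg at hmj
      exact hnotin (hdc m hm j hj (by omega))
    have := Set.ncard_le_ncard hsub2 (Set.finite_Icc 1 (j - 1))
    rw [ncard_Icc_nat] at this
    omega
  · intro hij
    have hmem : Set.Icc 1 j ⊆ S := by
      rintro m ⟨h1, h2⟩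
      exact ⟨h1, le_trans hij (η.antitone h2)⟩
    have := Set.ncard_le_ncard hmem hfin
    rw [ncard_Icc_nat] at this
    omega

lemma double_conj_part' {mu muc mucc : YPartition} (h2 : mu.IsConj muc)
    (h3 : muc.IsConj mucc) {j : ℕ} (hj : 1 ≤ j) : mucc.part j = mu.part j := by
  rw [h3 j hj]
  have hset : {i : ℕ | 1 ≤ i ∧ j ≤ muc.part i} = Set.Icc 1 (mu.part j) := by
    ext i
    simp only [Set.mem_setOf_eq, Set.mem_Icc]
    constructor
    · rintro ⟨h1, h2'⟩; exact ⟨h1, (conj_le_iff h2 h1 hj).mp h2'⟩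
    · rintro ⟨h1, h2'⟩; exact ⟨h1, (conj_le_iff h2 h1 hj).mpr h2'⟩
  rw [hset, ncard_Icc_nat]
  omega

lemma double_conj_part {mu muc mucc : YPartition} (h2 : mu.IsConj muc)
    (h3 : muc.IsConj mucc) : mucc.part = mu.part := by
  funext j
  rcases Nat.eq_zero_or_pos j with rfl | hj
  · rw [mucc.head, mu.head]
    exact double_conj_part' h2 h3 le_rfl
  · exact double_conj_part' h2 h3 hj

lemma durfee_bddAbove (η : YPartition) : BddAbove {i : ℕ | i ≤ η.part i} := by
  refine ⟨η.part 1, fun i hi => ?_⟩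
  rcases Nat.eq_zero_or_pos i with rfl | h1
  · exact Nat.zero_le _
  · exact le_trans hi (η.antitone h1)

lemma durfee_le_part (η : YPartition) : η.durfee ≤ η.part η.durfee := by
  have h : sSup {i : ℕ | i ≤ η.part i} ∈ {i : ℕ | i ≤ η.part i} :=
    Nat.sSup_mem ⟨0, by simp⟩ η.durfee_bddAbove
  simpa [YPartition.durfee] using h

lemma le_durfee (η : YPartition) {i : ℕ} (hi : i ≤ η.part i) : i ≤ η.durfee :=
  le_csSup η.durfee_bddAbove hi

lemma durfee_conj {nu nuc : YPartition} (h : nu.IsConj nuc) :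
    nuc.durfee = nu.durfee := by
  unfold durfee
  congr 1
  ext i
  simp only [Set.mem_setOf_eq]
  rcases Nat.eq_zero_or_pos i with rfl | hi
  · simp
  · exact conj_le_iff h hi hi

lemma dtil_sub {nu nuc : YPartition} (h4 : nu.IsConj nuc) :
    nuc.dtil - nuc.durfee = nu.part nu.durfee - nu.durfee := by
  rcases Nat.eq_zero_or_pos (nu.part 1) with h0 | hpos
  · -- empty case
    have hall : ∀ i, nu.part i = 0 := by
      intro i
      rcases Nat.eq_zero_or_pos i with rfl | hi
      · rw [nu.head]; exact h0
      · exact Nat.le_zero.mp (h0 ▸ nu.antitone hi)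
    have hallc : ∀ i, nuc.part i = 0 := by
      have h1 : ∀ i, 1 ≤ i → nuc.part i = 0 := by
        intro i hi
        rw [h4 i hi]
        have : {m : ℕ | 1 ≤ m ∧ i ≤ nu.part m} = ∅ := by
          ext m
          simp only [Set.mem_setOf_eq, Set.mem_empty_iff_false, iff_false]
          rintro ⟨hm1, hm2⟩
          rw [hall m] at hm2
          omega
        rw [this, Set.ncard_empty]
      intro i
      rcases Nat.eq_zero_or_pos i with rfl | hi
      · rw [nuc.head]; exact h1 1 le_rfl
      · exact h1 i hi
    have hdc : nuc.durfee = 0 := by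
      have := nuc.durfee_le_part
      rw [hallc] at this
      omega
    have hdtil : nuc.dtil = 0 := by
      unfold dtil
      rw [hdc]
      have : {i : ℕ | 0 ≤ nuc.part i} = Set.univ := by
        ext i; simp
      rw [this, csSup_of_not_bddAbove not_bddAbove_univ, csSup_empty]
      rfl
    rw [hdtil, hdc, hall]
    omega
  · -- nonempty case
    have hd1 : 1 ≤ nu.durfee := nu.le_durfee hpos
    set d := nu.durfee with hd
    have hdd : d ≤ nu.part d := nu.durfee_le_part
    have hdcd : nuc.durfee = d := durfee_conj h4
    have hmem : nu.part d ∈ {i : ℕ | nuc.durfee ≤ nuc.part i} := by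
      simp only [Set.mem_setOf_eq, hdcd]
      exact (conj_le_iff h4 (le_trans hd1 hdd) hd1).mpr le_rfl
    have hub : ∀ i ∈ {i : ℕ | nuc.durfee ≤ nuc.part i}, i ≤ nu.part d := by
      intro i hi
      simp only [Set.mem_setOf_eq, hdcd] at hi
      rcases Nat.eq_zero_or_pos i with rfl | h1
      · exact Nat.zero_le _
      · exact (conj_le_iff h4 h1 hd1).mp hi
    have hdtil : nuc.dtil = nu.part d := by
      unfold dtil
      exact le_antisymm (csSup_le ⟨_, hmem⟩ hub) (le_csSup ⟨nu.part d, hub⟩ hmem)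
    rw [hdtil, hdcd]

end YPartition

end Aux

/-- For nonempty `λ, μ` and any `ν`: `q^{K₂(λ,μ,ν)} = conj(q^{K₃(μ′,λ′,ν′)})`,
where `conj` is `q_k ↦ q_{−k}` (i.e. exponents satisfy `K₂(λ,μ,ν)(k) = K₃(μ′,λ′,ν′)(−k)`).
Here `mucc = (μ′)′` is the `λ′`-datum of `K₃(μ′,λ′,ν′)`. -/
theorem K2_eq_conj_K3 (lam lamc mu muc mucc nu nuc : YPartition)
    (hlam : lam.part 1 ≠ 0) (hmu : mu.part 1 ≠ 0)
    (h1 : lam.IsConj lamc) (h2 : mu.IsConj muc) (h3 : muc.IsConj mucc)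
    (h4 : nu.IsConj nuc) (k : ℤ) :
    K2 lamc mu nu k = K3 mucc lamc nuc (-k) := by
  have hmucc : mucc.part = mu.part := YPartition.double_conj_part h2 h3
  have hlen : mucc.len = mu.len := by unfold YPartition.len; rw [hmucc]
  have hbd : nuc.dtil - nuc.durfee = nu.part nu.durfee - nu.durfee :=
    YPartition.dtil_sub h4
  simp only [K2, K3, hlen, hmucc, hbd]
  simp only [neg_eq_iff_eq_neg, neg_sub, sub_eq_neg_add, neg_add_rev, neg_neg]
end
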